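/- arXiv:2507.13358 — 9 statements merged into one kernel-verified Lean document; each statement's English description precedes it below -/
import Mathlib

section
/- Let R be an integral domain and let M_n : ℤ_p → R be a sequence of functions such that each M_n is locally constant mod p^n, has no zeroes, and satisfies M_n(θ_p^{∘m}(z)) = M_{m+n}(z)/M_m(z) for all z ∈ ℤ_p and all m,n ≥ 0 (with both sides in R). Then there exist nonzero r_0,...,r_{p-1} ∈ R such that M_n(z) = ∏_{k=0}^{n-1} r_{[θ_p^{∘k}(z)]_p} for all n and z; conversely any sequence of that product form satisfies the two listed properties. -/
/-- `m`-fold shift of a digit stream: models `θ_p^{∘m}(z)`. -/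
def shiftIter {p : ℕ} (m : ℕ) (z : ℕ → Fin p) : ℕ → Fin p := fun i => z (i + m)

/-- Characterization of M-functions:  a sequence `M_n : ℤ_p → R` (on digit streams) is of the
form `M_n(z) = ∏_{i=0}^{n-1} r_{[θ_p^{∘i}(z)]_p}` for some nonzero `r_0,...,r_{p-1} ∈ R`
if and only if each `M_n` is locally constant mod `p^n`, has no zeroes, and satisfies
`M_n(θ_p^{∘m}(z)) = M_{m+n}(z)/M_m(z)` for all `z, m, n` (stated multiplicatively in `R`). -/
theorem stmt3 {p : ℕ} (hp : 2 ≤ p) {R : Type*} [CommRing R] [IsDomain R]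
    (M : ℕ → (ℕ → Fin p) → R) :
    ((∀ n : ℕ, ∀ z w : ℕ → Fin p, (∀ i < n, z i = w i) → M n z = M n w) ∧
     (∀ n : ℕ, ∀ z : ℕ → Fin p, M n z ≠ 0) ∧
     (∀ m n : ℕ, ∀ z : ℕ → Fin p, M n (shiftIter m z) * M m z = M (m + n) z))
    ↔ (∃ r : Fin p → R, (∀ i, r i ≠ 0) ∧
        ∀ n : ℕ, ∀ z : ℕ → Fin p, M n z = ∏ i ∈ Finset.range n, r (z i)) := by
  constructor
  · rintro ⟨h1, h2, h3⟩
    have hM0 : ∀ z : ℕ → Fin p, M 0 z = 1 := by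
      intro z
      have h := h3 0 0 z
      have hs : shiftIter 0 z = z := by funext i; simp [shiftIter]
      rw [hs] at h
      have : M 0 z * M 0 z = 1 * M 0 z := by rw [one_mul]; exact h
      exact mul_right_cancel₀ (h2 0 z) this
    refine ⟨fun j => M 1 (fun _ => j), fun j => h2 1 _, ?_⟩
    have hM1 : ∀ z : ℕ → Fin p, M 1 z = M 1 (fun _ => z 0) := by
      intro z
      exact h1 1 z (fun _ => z 0) (by intro i hi; interval_cases i; rfl)
    intro n
    induction n with
    | zero => intro z; simpa using hM0 z
    | succ n ih =>
      intro z
      have h := h3 1 n z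
      rw [Nat.add_comm 1 n] at h
      rw [← h, ih (shiftIter 1 z), Finset.prod_range_succ', hM1 z]
      simp [shiftIter, mul_comm]
  · rintro ⟨r, hr, hM⟩
    refine ⟨?_, ?_, ?_⟩
    · intro n z w hzw
      rw [hM, hM]
      exact Finset.prod_congr rfl (fun i hi => by rw [hzw i (Finset.mem_range.mp hi)])
    · intro n z
      rw [hM]
      exact Finset.prod_ne_zero_iff.mpr (fun i _ => hr _)
    · intro m n z
      rw [hM, hM, hM, mul_comm, Finset.prod_range_add]
      congr 1
      exact Finset.prod_congr rfl (fun i _ => by rw [shiftIter, Nat.add_comm])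
end

section
/- Let κ be the κ-factor of an M-function with multipliers r_0,...,r_{p-1} in an integral domain, i.e. κ(m) = ∏_{j=1}^{p-1} (r_j/r_0)^{#_{p:j}(m)}. Then for all z ∈ ℤ_p and all m, n ≥ 0, κ([θ_p^{∘m}(z)]_{p^n}) = κ([z]_{p^{m+n}}) / κ([z]_{p^m}). -/
/-- The number of occurrences of the digit `k` among the first `n` base-`p` digits of `z`,
i.e. `#_{p:k}([z]_{p^n})`. -/
def digitCount {p : ℕ} (z : ℕ → Fin p) (n : ℕ) (k : Fin p) : ℕ :=
  ((Finset.range n).filter fun i => z i = k).card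

/-- The κ-factor of an M-function with multipliers `r_0,...,r_{p-1}`, evaluated at
`[z]_{p^n}`:  `κ([z]_{p^n}) = ∏_{j=1}^{p-1} (r_j/r_0)^{#_{p:j}([z]_{p^n})}` in `Frac R`. -/
noncomputable def kappa {p : ℕ} [NeZero p] {R : Type*} [CommRing R] [IsDomain R] (r : Fin p → R)
    (z : ℕ → Fin p) (n : ℕ) : FractionRing R :=
  ∏ j ∈ Finset.univ.filter (fun j : Fin p => j ≠ 0),
    (algebraMap R (FractionRing R) (r j) / algebraMap R (FractionRing R) (r 0))
      ^ digitCount z n j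

lemma dc_add {p : ℕ} (z : ℕ → Fin p) (m n : ℕ) (k : Fin p) :
    digitCount z (m + n) k = digitCount z m k + digitCount (shiftIter m z) n k := by
  unfold digitCount shiftIter
  have h : Finset.range (m + n) = Finset.range m ∪ (Finset.range n).map ⟨fun i => i + m, add_left_injective m⟩ := by
    ext x
    simp only [Finset.mem_union, Finset.mem_range, Finset.mem_map, Function.Embedding.coeFn_mk]
    constructor
    · intro hx
      by_cases hc : x < m
      · exact Or.inl hc
      · exact Or.inr ⟨x - m, by omega, by omega⟩
    · rintro (h | ⟨a, ha, rfl⟩) <;> omega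
  classical
  rw [h, Finset.filter_union, Finset.card_union_of_disjoint]
  · rw [Finset.filter_map, Finset.card_map]
    rfl
  · refine Finset.disjoint_filter_filter ?_
    simp only [Finset.disjoint_left, Finset.mem_range, Finset.mem_map, Function.Embedding.coeFn_mk]
    rintro x hx ⟨a, ha, rfl⟩
    omega

/-- For the κ-factor of an M-function with nonzero multipliers in an integral domain:
`κ([θ_p^{∘m}(z)]_{p^n}) = κ([z]_{p^{m+n}}) / κ([z]_{p^m})` for all `z ∈ ℤ_p`, `m, n ≥ 0`. -/
theorem stmt4 {p : ℕ} [NeZero p] (hp : 2 ≤ p) {R : Type*} [CommRing R] [IsDomain R]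
    (r : Fin p → R) (hr : ∀ i, r i ≠ 0) (z : ℕ → Fin p) (m n : ℕ) :
    kappa r (shiftIter m z) n = kappa r z (m + n) / kappa r z m := by
  have hkey : kappa r z (m + n) = kappa r z m * kappa r (shiftIter m z) n := by
    unfold kappa
    rw [← Finset.prod_mul_distrib]
    refine Finset.prod_congr rfl fun j _ => ?_
    rw [← pow_add, dc_add]
  have hmap : ∀ i : Fin p, algebraMap R (FractionRing R) (r i) ≠ 0 := fun i => by
    simpa using (IsFractionRing.to_map_eq_zero_iff (K := FractionRing R)).not.mpr (hr i)
  have hne : kappa r z m ≠ 0 := by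
    refine Finset.prod_ne_zero_iff.mpr fun j _ => ?_
    exact pow_ne_zero _ (div_ne_zero (hmap j) (hmap 0))
  rw [eq_div_iff hne, hkey, mul_comm]
end

section
/- Let g : ℤ_p → R be locally constant mod p^{N}, with Fourier transform ĝ(t) = p^{−N} ∑_{n=0}^{p^N−1} g(n) e^{−2πint}. Let q_0,...,q_{p−1} ∈ R and define f(z) = q_{[z]_p} · g(θ_p(z)). Then f is locally constant mod p^{N+1} and its Fourier transform is f̂(t) = ( (1/p) ∑_{j=0}^{p−1} q_j e^{−2πijt} ) · ĝ(pt) for all t ∈ Ẑ_p. -/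
/-- `[z]_{p^n}`: the residue of `z` (given by its digit stream) mod `p^n`. -/
def trunc {p : ℕ} (z : ℕ → Fin p) (n : ℕ) : ℕ :=
  ∑ i ∈ Finset.range n, (z i : ℕ) * p ^ i

/-- The shift map `θ_p` on digit streams. -/
def shift {p : ℕ} (z : ℕ → Fin p) : ℕ → Fin p := fun i => z (i + 1)

/-- The digit stream of a natural number `m`. -/
def natStream (p : ℕ) [NeZero p] (m : ℕ) : ℕ → Fin p :=
  fun i => ⟨m / p ^ i % p, Nat.mod_lt _ (Nat.pos_of_ne_zero (NeZero.ne p))⟩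

/-- The Fourier transform of a function `F` that is locally constant mod `p^M`, evaluated at
`t = a/p^d ∈ Ẑ_p`:  `F̂(t) = p^{−M} ∑_{m=0}^{p^M−1} F(m) e^{−2πimt}`, where
`e^{−2πimt} = ζ_d^{m·(p^d − a mod p^d)}` for a compatible system `ζ` of p-power roots of
unity. -/
def fourierTF {p : ℕ} [NeZero p] {R : Type*} [CommRing R] [Invertible (p : R)]
    (ζ : ℕ → R) (M : ℕ) (F : (ℕ → Fin p) → R) (a d : ℕ) : R :=
  (⅟(p : R)) ^ M *
    ∑ m ∈ Finset.range (p ^ M), F (natStream p m) * (ζ d) ^ (m * (p ^ d - a % p ^ d))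

/-- Split a sum over `range (a*b)` into blocks of size `b`. -/
lemma sum_range_mul_split {R : Type*} [AddCommMonoid R] (f : ℕ → R) (a b : ℕ) :
    ∑ m ∈ Finset.range (a * b), f m
      = ∑ i ∈ Finset.range a, ∑ j ∈ Finset.range b, f (b * i + j) := by
  induction a with
  | zero => simp
  | succ n ih =>
      rw [Nat.succ_mul, Finset.sum_range_add, ih, Finset.sum_range_succ]
      congr 1
      apply Finset.sum_congr rfl
      intro j _
      ring_nf

/-- A root of unity power depends only on the exponent mod the order. -/
lemma pow_of_modEq {R : Type*} [CommRing R] {ζ : R} {n : ℕ} (h : ζ ^ n = 1)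
    {x y : ℕ} (hxy : x ≡ y [MOD n]) : ζ ^ x = ζ ^ y := by
  have key : ∀ z : ℕ, ζ ^ z = ζ ^ (z % n) := by
    intro z
    conv_lhs => rw [← Nat.div_add_mod z n]
    rw [pow_add, pow_mul, h, one_pow, one_mul]
  rw [key x, key y, hxy]

/-- Let `g : ℤ_p → R` be locally constant mod `p^N` with Fourier transform `ĝ`, let
`q_0,...,q_{p−1} ∈ R`, and set `f(z) = q_{[z]_p}·g(θ_p(z))`.  Then `f` is locally constant
mod `p^{N+1}` and `f̂(t) = ((1/p)∑_{j<p} q_j e^{−2πijt})·ĝ(pt)` for all `t ∈ Ẑ_p`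
(represented as `t = a/p^d`, so that `pt = pa/p^d`). -/
theorem stmt7 {p : ℕ} [NeZero p] (hp : 2 ≤ p) {R : Type*} [CommRing R] [Invertible (p : R)]
    (ζ : ℕ → R) (hprim : ∀ d, IsPrimitiveRoot (ζ d) (p ^ d))
    (hcomp : ∀ d, ζ (d + 1) ^ p = ζ d)
    (N : ℕ) (g : (ℕ → Fin p) → R)
    (hg : ∀ z w : ℕ → Fin p, (∀ i < N, z i = w i) → g z = g w)
    (q : Fin p → R) :
    (∀ z w : ℕ → Fin p, (∀ i < N + 1, z i = w i) →
        q (z 0) * g (shift z) = q (w 0) * g (shift w)) ∧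
    (∀ a d : ℕ,
        fourierTF ζ (N + 1) (fun z => q (z 0) * g (shift z)) a d
          = (⅟(p : R) * ∑ j : Fin p, q j * (ζ d) ^ ((j : ℕ) * (p ^ d - a % p ^ d)))
              * fourierTF ζ N g (p * a) d) := by
  have hp0 : 0 < p := Nat.pos_of_ne_zero (NeZero.ne p)
  constructor
  · intro z w h
    rw [h 0 (by omega), hg (shift z) (shift w) (fun i hi => h (i + 1) (by omega))]
  · intro a d
    have hpd : 0 < p ^ d := pow_pos hp0 d
    set e : ℕ := p ^ d - a % p ^ d with he
    set e' : ℕ := p ^ d - (p * a) % p ^ d with he'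
    -- key congruence : p * e ≡ e' [MOD p^d]
    have hmod : ∀ i : ℕ, (p * i) * e ≡ i * e' [MOD p ^ d] := by
      intro i
      have h1 : a % p ^ d ≤ p ^ d := (Nat.mod_lt _ hpd).le
      have h2 : (p * a) % p ^ d ≤ p ^ d := (Nat.mod_lt _ hpd).le
      have base : p * e ≡ e' [MOD p ^ d] := by
        have hcast : ((p * e : ℕ) : ZMod (p ^ d)) = ((e' : ℕ) : ZMod (p ^ d)) := by
          rw [he, he']
          push_cast [Nat.cast_sub h1, Nat.cast_sub h2]
          have h0 : ((p : ZMod (p ^ d))) ^ d = 0 := by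
            rw [← Nat.cast_pow, ZMod.natCast_self]
          have ha : ((a % p ^ d : ℕ) : ZMod (p ^ d)) = (a : ZMod (p ^ d)) :=
            ZMod.natCast_mod a (p ^ d)
          have hb : ((p * a % p ^ d : ℕ) : ZMod (p ^ d)) = ((p * a : ℕ) : ZMod (p ^ d)) :=
            ZMod.natCast_mod (p * a) (p ^ d)
          rw [ha, hb, h0]
          push_cast
          ring
        exact (ZMod.natCast_eq_natCast_iff _ _ _).mp hcast
      calc (p * i) * e = i * (p * e) := by ring
        _ ≡ i * e' [MOD p ^ d] := base.mul_left i
    have hz1 : (ζ d) ^ (p ^ d) = 1 := (hprim d).pow_eq_one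
    -- unfold
    unfold fourierTF
    rw [pow_succ, ← he, ← he']
    have hsplit : (p : ℕ) ^ (N + 1) = p ^ N * p := by ring
    rw [hsplit, sum_range_mul_split]
    have hterm : ∀ i ∈ Finset.range (p ^ N), ∀ j ∈ Finset.range p,
        (fun z => q (z 0) * g (shift z)) (natStream p (p * i + j)) *
            (ζ d) ^ ((p * i + j) * e)
          = (fun n : ℕ => q ⟨n % p, Nat.mod_lt _ hp0⟩ * (ζ d) ^ (n % p * e)) j *
            (g (natStream p i) * (ζ d) ^ (i * e')) := by
      intro i hi j hj
      have hj' : j < p := Finset.mem_range.mp hj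
      have h0 : natStream p (p * i + j) 0 = ⟨j % p, Nat.mod_lt _ hp0⟩ := by
        apply Fin.ext
        simp [natStream, Nat.mul_add_mod]
      have hs : shift (natStream p (p * i + j)) = natStream p i := by
        funext k
        apply Fin.ext
        simp only [shift, natStream]
        congr 1
        rw [pow_succ', ← Nat.div_div_eq_div_mul, Nat.mul_add_div hp0,
          Nat.div_eq_of_lt hj', Nat.add_zero]
      have hzeta : (ζ d) ^ ((p * i + j) * e)
          = (ζ d) ^ (j * e) * (ζ d) ^ (i * e') := by
        have : (p * i + j) * e = j * e + (p * i) * e := by ring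
        rw [this, pow_add, pow_of_modEq hz1 (hmod i)]
      simp only [h0, hs, hzeta, Nat.mod_eq_of_lt hj']
      ring
    rw [Finset.sum_congr rfl (fun i hi => Finset.sum_congr rfl (hterm i hi))]
    simp only [← Finset.sum_mul, ← Finset.mul_sum]
    have hfin : ∑ j : Fin p, q j * (ζ d) ^ ((j : ℕ) * e)
        = ∑ j ∈ Finset.range p,
            (fun n : ℕ => q ⟨n % p, Nat.mod_lt _ hp0⟩ * (ζ d) ^ (n % p * e)) j := by
      rw [Finset.sum_range]
      apply Finset.sum_congr rfl
      intro j _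
      congr 1
      · congr 1
        apply Fin.ext
        simp [Nat.mod_eq_of_lt j.isLt]
      · congr 1
        rw [Nat.mod_eq_of_lt j.isLt]
    rw [hfin]
    ring
end

section
/- Let z ∈ ℤ_p have well-defined digit densities d_{p:k}(z) for all k, and let γ : ℕ → ℕ satisfy γ(n) ≤ n, γ(n) → ∞, and γ(n)/n → L ∈ ℝ. Then for each k, lim_{n→∞} (1/n)·#_{p:k}([θ_p^{∘γ(n)}(z)]_{p^{n−γ(n)}}) = (1 − L)·d_{p:k}(z). -/
open Filter Topology

/-- If `z ∈ ℤ_p` has well-defined digit densities `d_{p:k}(z)` and `γ : ℕ → ℕ` satisfies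
`γ(n) ≤ n`, `γ(n) → ∞`, `γ(n)/n → L`, then for each digit `k`,
`(1/n)·#_{p:k}([θ_p^{∘γ(n)}(z)]_{p^{n−γ(n)}}) → (1−L)·d_{p:k}(z)`. -/
theorem stmt13 {p : ℕ} (hp : 2 ≤ p) (z : ℕ → Fin p) (d : Fin p → ℝ)
    (hz : ∀ k, Tendsto (fun n => (digitCount z n k : ℝ) / n) atTop (𝓝 (d k)))
    (γ : ℕ → ℕ) (hγle : ∀ n, γ n ≤ n) (hγtop : Tendsto γ atTop atTop)
    (L : ℝ) (hL : Tendsto (fun n => (γ n : ℝ) / n) atTop (𝓝 L)) :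
    ∀ k, Tendsto (fun n => (digitCount (shiftIter (γ n) z) (n - γ n) k : ℝ) / n)
      atTop (𝓝 ((1 - L) * d k)) := by
  intro k
  -- key combinatorial identity
  have key : ∀ m n : ℕ, m ≤ n →
      digitCount z m k + digitCount (shiftIter m z) (n - m) k = digitCount z n k := by
    intro m n hmn
    unfold digitCount shiftIter
    have h1 : ((Finset.range (n - m)).filter fun i => z (i + m) = k).card
        = ((Finset.Ico m n).filter fun i => z i = k).card := by
      apply Finset.card_bij (fun i _ => i + m)
      · intro a ha
        simp only [Finset.mem_filter, Finset.mem_range, Finset.mem_Ico] at ha ⊢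
        exact ⟨⟨by omega, by omega⟩, ha.2⟩
      · intro a _ b _ hab; omega
      · intro b hb
        simp only [Finset.mem_filter, Finset.mem_Ico] at hb
        refine ⟨b - m, ?_, by omega⟩
        simp only [Finset.mem_filter, Finset.mem_range]
        constructor
        · omega
        · have : b - m + m = b := by omega
          rw [this]; exact hb.2
    rw [h1]
    rw [← Finset.card_union_of_disjoint]
    · congr 1
      rw [← Finset.filter_union]
      congr 1
      rw [Finset.range_eq_Ico, Finset.Ico_union_Ico_eq_Ico (by omega) hmn, Finset.range_eq_Ico]
    · apply Finset.disjoint_filter_filter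
      rw [Finset.range_eq_Ico]
      exact Finset.Ico_disjoint_Ico_consecutive 0 m n
  -- limit of digitCount z (γ n) k / γ n
  have h2 : Tendsto (fun n => (digitCount z (γ n) k : ℝ) / (γ n)) atTop (𝓝 (d k)) :=
    (hz k).comp hγtop
  have h3 : Tendsto (fun n => (digitCount z (γ n) k : ℝ) / n) atTop (𝓝 (d k * L)) := by
    have := h2.mul hL
    apply this.congr'
    filter_upwards [hγtop.eventually_gt_atTop 0] with n hn
    have hγ : (γ n : ℝ) ≠ 0 := by positivity
    field_simp
  have h4 : Tendsto (fun n => (digitCount z n k : ℝ) / n - (digitCount z (γ n) k : ℝ) / n)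
      atTop (𝓝 (d k - d k * L)) := (hz k).sub h3
  have heq : (1 - L) * d k = d k - d k * L := by ring
  rw [heq]
  apply h4.congr
  intro n
  have hk := key (γ n) n (hγle n)
  have : (digitCount (shiftIter (γ n) z) (n - γ n) k : ℝ)
      = (digitCount z n k : ℝ) - (digitCount z (γ n) k : ℝ) := by
    have := congrArg (fun x : ℕ => (x : ℝ)) hk
    push_cast at this
    linarith
  rw [this, sub_div]
end

section
/- Let E_n(z) = e_0^n ∏_{k=1}^{p−1} (e_k/e_0)^{#_{p:k}([z]_{p^n})} be a real-valued p-adic M-function with positive multipliers e_0,...,e_{p−1}. If ln e_0 + ∑_{k : e_k > e_0} d̄_{p:k}(z)·|ln(e_k/e_0)| < ∑_{k : e_k ≤ e_0} d̲_{p:k}(z)·|ln(e_k/e_0)|, then the series ∑_{n=0}^∞ E_n(z) converges in ℝ. -/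
open Filter Topology

/-- `#_{p:k}([z]_{p^n})` for a natural-number digit value `k`: the number of digits equal to
`k` among the first `n` base-`p` digits of `z`. -/
def digitCountN {p : ℕ} (z : ℕ → Fin p) (n k : ℕ) : ℕ :=
  ((Finset.range n).filter fun i => (z i : ℕ) = k).card

lemma digitCountN_le {p : ℕ} (z : ℕ → Fin p) (n k : ℕ) : digitCountN z n k ≤ n := by
  classical
  calc digitCountN z n k ≤ (Finset.range n).card := Finset.card_filter_le _ _
  _ = n := Finset.card_range n

/-- Let `E_n(z) = e_0^n ∏_{k=1}^{p−1}(e_k/e_0)^{#_{p:k}([z]_{p^n})}` be a real-valued p-adic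
M-function with positive multipliers.  If
`ln e_0 + ∑_{k : e_k > e_0} d̄_{p:k}(z)·|ln(e_k/e_0)| < ∑_{k : e_k ≤ e_0} d̲_{p:k}(z)·|ln(e_k/e_0)|`
(`d̄`, `d̲` denoting upper and lower digit densities), then `∑_n E_n(z)` converges in `ℝ`. -/
theorem stmt14 {p : ℕ} (hp : 2 ≤ p) (z : ℕ → Fin p) (e : ℕ → ℝ)
    (he : ∀ k < p, 0 < e k)
    (hcond :
      Real.log (e 0)
          + ∑ k ∈ (Finset.Ico 1 p).filter (fun k => e 0 < e k),
              (Filter.limsup (fun n => (digitCountN z n k : ℝ) / n) atTop)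
                * |Real.log (e k / e 0)|
        < ∑ k ∈ (Finset.Ico 1 p).filter (fun k => e k ≤ e 0),
              (Filter.liminf (fun n => (digitCountN z n k : ℝ) / n) atTop)
                * |Real.log (e k / e 0)|) :
    Summable (fun n =>
      e 0 ^ n * ∏ k ∈ Finset.Ico 1 p, (e k / e 0) ^ digitCountN z n k) := by
  classical
  have he0 : 0 < e 0 := he 0 (by omega)
  have hratio : ∀ k ∈ Finset.Ico 1 p, 0 < e k / e 0 := by
    intro k hk
    have := he k (Finset.mem_Ico.1 hk).2
    positivity
  set c : ℕ → ℕ → ℝ := fun k n => (digitCountN z n k : ℝ) / n with hc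
  -- bounds on c
  have hc_nonneg : ∀ k n, 0 ≤ c k n := by intro k n; positivity
  have hc_le_one : ∀ k n, c k n ≤ 1 := by
    intro k n
    rcases Nat.eq_zero_or_pos n with h | h
    · simp [hc, h]
    · have : (digitCountN z n k : ℝ) ≤ n := by
        exact_mod_cast digitCountN_le z n k
      rw [hc, div_le_one (by exact_mod_cast h)]
      exact this
  set A := (Finset.Ico 1 p).filter (fun k => e 0 < e k) with hA
  set B := (Finset.Ico 1 p).filter (fun k => e k ≤ e 0) with hB
  set L := Real.log (e 0) + ∑ k ∈ A, limsup (c k) atTop * |Real.log (e k / e 0)|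
      - ∑ k ∈ B, liminf (c k) atTop * |Real.log (e k / e 0)| with hL
  have hLneg : L < 0 := by
    rw [hL, sub_neg]
    exact hcond
  set M := ∑ k ∈ Finset.Ico 1 p, |Real.log (e k / e 0)| with hM
  have hM0 : 0 ≤ M := Finset.sum_nonneg fun _ _ => abs_nonneg _
  set ε := -L / (2 * (M + 1)) with hε
  have hεpos : 0 < ε := div_pos (by linarith) (by linarith)
  have hεM : L + ε * M ≤ L / 2 := by
    have h1 : ε * (M + 1) = -L / 2 := by
      rw [hε]; field_simp
    nlinarith [hεpos]
  -- eventual bounds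
  have hAev : ∀ k ∈ A, ∀ᶠ n in atTop, c k n < limsup (c k) atTop + ε := by
    intro k hk
    apply eventually_lt_of_limsup_lt
    · have hbdd : IsBoundedUnder (· ≤ ·) atTop (c k) :=
        isBoundedUnder_of ⟨1, fun n => hc_le_one k n⟩
      have hcobdd : IsCoboundedUnder (· ≤ ·) atTop (c k) :=
        (isBoundedUnder_of ⟨0, fun n => hc_nonneg k n⟩ :
          IsBoundedUnder (· ≥ ·) atTop (c k)).isCoboundedUnder_le
      linarith [le_refl (limsup (c k) atTop), hεpos]
    · exact isBoundedUnder_of ⟨1, fun n => hc_le_one k n⟩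
  have hBev : ∀ k ∈ B, ∀ᶠ n in atTop, liminf (c k) atTop - ε < c k n := by
    intro k hk
    apply eventually_lt_of_lt_liminf
    · linarith [le_refl (liminf (c k) atTop), hεpos]
    · exact isBoundedUnder_of ⟨0, fun n => hc_nonneg k n⟩
  have hall : ∀ᶠ n in atTop,
      (∀ k ∈ A, c k n < limsup (c k) atTop + ε) ∧
      (∀ k ∈ B, liminf (c k) atTop - ε < c k n) ∧ 1 ≤ n := by
    refine (Filter.eventually_all_finset A |>.2 hAev).and
      ((Filter.eventually_all_finset B |>.2 hBev).and (eventually_ge_atTop 1))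
  obtain ⟨N, hN⟩ := Filter.eventually_atTop.1 hall
  -- key pointwise bound for large n
  have key : ∀ n ≥ N,
      e 0 ^ n * ∏ k ∈ Finset.Ico 1 p, (e k / e 0) ^ digitCountN z n k
        ≤ Real.exp (L / 2) ^ n := by
    intro n hn
    obtain ⟨h1, h2, h3⟩ := hN n hn
    have hnpos : (0 : ℝ) < n := by exact_mod_cast h3
    -- rewrite E n as an exponential
    have hEeq : e 0 ^ n * ∏ k ∈ Finset.Ico 1 p, (e k / e 0) ^ digitCountN z n k
        = Real.exp ((n : ℝ) * Real.log (e 0)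
            + ∑ k ∈ Finset.Ico 1 p, (digitCountN z n k : ℝ) * Real.log (e k / e 0)) := by
      rw [Real.exp_add, Real.exp_sum]
      congr 1
      · rw [Real.exp_nat_mul, Real.exp_log he0]
      · exact Finset.prod_congr rfl fun k hk => by
          rw [Real.exp_nat_mul, Real.exp_log (hratio k hk)]
    rw [hEeq, ← Real.exp_nat_mul, Real.exp_le_exp]
    -- split the sum into A and B
    have hsplit : ∑ k ∈ Finset.Ico 1 p, (digitCountN z n k : ℝ) * Real.log (e k / e 0)
        = ∑ k ∈ A, (digitCountN z n k : ℝ) * Real.log (e k / e 0)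
          + ∑ k ∈ B, (digitCountN z n k : ℝ) * Real.log (e k / e 0) := by
      rw [hA, hB, ← Finset.sum_filter_add_sum_filter_not (Finset.Ico 1 p)
        (fun k => e 0 < e k)]
      congr 1
      apply Finset.sum_congr _ fun _ _ => rfl
      apply Finset.filter_congr
      intro k _
      simp [not_lt]
    have hMsplit : M = ∑ k ∈ A, |Real.log (e k / e 0)| + ∑ k ∈ B, |Real.log (e k / e 0)| := by
      rw [hM, hA, hB, ← Finset.sum_filter_add_sum_filter_not (Finset.Ico 1 p)
        (fun k => e 0 < e k)]
      congr 1
      apply Finset.sum_congr _ fun _ _ => rfl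
      apply Finset.filter_congr
      intro k _
      simp [not_lt]
    -- bound each part
    have hAbound : ∑ k ∈ A, (digitCountN z n k : ℝ) * Real.log (e k / e 0)
        ≤ ∑ k ∈ A, (limsup (c k) atTop + ε) * |Real.log (e k / e 0)| * n := by
      apply Finset.sum_le_sum
      intro k hk
      have hkIco : k ∈ Finset.Ico 1 p := Finset.mem_filter.1 hk |>.1
      have hek : e 0 < e k := (Finset.mem_filter.1 hk).2
      have hlog : 0 ≤ Real.log (e k / e 0) :=
        Real.log_nonneg ((one_le_div he0).2 hek.le)
      have habs : |Real.log (e k / e 0)| = Real.log (e k / e 0) := abs_of_nonneg hlog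
      have hd : (digitCountN z n k : ℝ) ≤ (limsup (c k) atTop + ε) * n := by
        have := h1 k hk
        rw [hc] at this
        have := (div_lt_iff₀ hnpos).1 this
        linarith
      calc (digitCountN z n k : ℝ) * Real.log (e k / e 0)
          ≤ ((limsup (c k) atTop + ε) * n) * Real.log (e k / e 0) :=
            mul_le_mul_of_nonneg_right hd hlog
        _ = (limsup (c k) atTop + ε) * |Real.log (e k / e 0)| * n := by
            rw [habs]; ring
    have hBbound : ∑ k ∈ B, (digitCountN z n k : ℝ) * Real.log (e k / e 0)
        ≤ ∑ k ∈ B, -((liminf (c k) atTop - ε) * |Real.log (e k / e 0)| * n) := by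
      apply Finset.sum_le_sum
      intro k hk
      have hkIco : k ∈ Finset.Ico 1 p := Finset.mem_filter.1 hk |>.1
      have hek : e k ≤ e 0 := (Finset.mem_filter.1 hk).2
      have hlog : Real.log (e k / e 0) ≤ 0 :=
        Real.log_nonpos (le_of_lt (hratio k hkIco)) ((div_le_one he0).2 hek)
      have habs : |Real.log (e k / e 0)| = -Real.log (e k / e 0) := abs_of_nonpos hlog
      have hd : (liminf (c k) atTop - ε) * n ≤ (digitCountN z n k : ℝ) := by
        have := h2 k hk
        rw [hc] at this
        have := (lt_div_iff₀ hnpos).1 this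
        linarith
      have habs0 : 0 ≤ |Real.log (e k / e 0)| := abs_nonneg _
      calc (digitCountN z n k : ℝ) * Real.log (e k / e 0)
          = -((digitCountN z n k : ℝ) * |Real.log (e k / e 0)|) := by rw [habs]; ring
        _ ≤ -(((liminf (c k) atTop - ε) * n) * |Real.log (e k / e 0)|) := by
            apply neg_le_neg
            exact mul_le_mul_of_nonneg_right hd habs0
        _ = -((liminf (c k) atTop - ε) * |Real.log (e k / e 0)| * n) := by ring
    -- combine
    have eA : ∑ k ∈ A, (limsup (c k) atTop + ε) * |Real.log (e k / e 0)| * n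
        = (∑ k ∈ A, limsup (c k) atTop * |Real.log (e k / e 0)|) * n
          + ε * ((∑ k ∈ A, |Real.log (e k / e 0)|) * n) := by
      rw [show ∑ k ∈ A, (limsup (c k) atTop + ε) * |Real.log (e k / e 0)| * n
          = ∑ k ∈ A, (limsup (c k) atTop * |Real.log (e k / e 0)| * n
            + ε * (|Real.log (e k / e 0)| * n)) from
        Finset.sum_congr rfl fun k _ => by ring]
      rw [Finset.sum_add_distrib, ← Finset.sum_mul, ← Finset.mul_sum, ← Finset.sum_mul]
    have eB : ∑ k ∈ B, -((liminf (c k) atTop - ε) * |Real.log (e k / e 0)| * n)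
        = -((∑ k ∈ B, liminf (c k) atTop * |Real.log (e k / e 0)|) * n)
          + ε * ((∑ k ∈ B, |Real.log (e k / e 0)|) * n) := by
      rw [show ∑ k ∈ B, -((liminf (c k) atTop - ε) * |Real.log (e k / e 0)| * n)
          = ∑ k ∈ B, (-(liminf (c k) atTop * |Real.log (e k / e 0)| * n)
            + ε * (|Real.log (e k / e 0)| * n)) from
        Finset.sum_congr rfl fun k _ => by ring]
      rw [Finset.sum_add_distrib, Finset.sum_neg_distrib, ← Finset.sum_mul,
        ← Finset.mul_sum, ← Finset.sum_mul]
    have hcomb : (n : ℝ) * Real.log (e 0)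
        + ∑ k ∈ Finset.Ico 1 p, (digitCountN z n k : ℝ) * Real.log (e k / e 0)
        ≤ (L + ε * M) * n := by
      rw [hsplit]
      have hstep := add_le_add_right (add_le_add hAbound hBbound)
        ((n : ℝ) * Real.log (e 0))
      refine hstep.trans_eq ?_
      rw [eA, eB, hL, hMsplit]
      ring
    calc (n : ℝ) * Real.log (e 0)
        + ∑ k ∈ Finset.Ico 1 p, (digitCountN z n k : ℝ) * Real.log (e k / e 0)
        ≤ (L + ε * M) * n := hcomb
      _ ≤ (L / 2) * n := mul_le_mul_of_nonneg_right hεM (le_of_lt hnpos)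
      _ = (n : ℝ) * (L / 2) := by ring
  -- conclude summability
  have hrlt : Real.exp (L / 2) < 1 := by
    rw [← Real.exp_zero]
    exact Real.exp_lt_exp.2 (by linarith)
  have hrpos : 0 < Real.exp (L / 2) := Real.exp_pos _
  have hgeo : Summable (fun n : ℕ => Real.exp (L / 2) ^ (n + N)) := by
    simp_rw [pow_add]
    exact (summable_geometric_of_lt_one hrpos.le hrlt).mul_right _
  rw [← summable_nat_add_iff N]
  apply Summable.of_nonneg_of_le _ _ hgeo
  · intro n
    have h1 : 0 < e 0 ^ (n + N) := pow_pos he0 _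
    have h2 : 0 < ∏ k ∈ Finset.Ico 1 p, (e k / e 0) ^ digitCountN z (n + N) k :=
      Finset.prod_pos fun k hk => pow_pos (hratio k hk) _
    positivity
  · intro n
    exact key (n + N) (by omega)
end

section
/- Let a : ℕ → (0,∞) be a sequence of positive reals with a(n) → 0. Then there exists a nondecreasing function γ : ℕ → ℕ with γ(n) ≤ n for all n and γ(n) → ∞, such that a(n)/a(γ(n)) → 0 as n → ∞. -/
open Filter Topology

/-- For every sequence of positive reals `a(n) → 0`, there is a nondecreasing `γ : ℕ → ℕ`
with `γ(n) ≤ n` and `γ(n) → ∞`, such that `a(n)/a(γ(n)) → 0`. -/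
theorem stmt15 (a : ℕ → ℝ) (hpos : ∀ n, 0 < a n) (h0 : Tendsto a atTop (𝓝 0)) :
    ∃ γ : ℕ → ℕ, Monotone γ ∧ (∀ n, γ n ≤ n) ∧ Tendsto γ atTop atTop ∧
      Tendsto (fun n => a n / a (γ n)) atTop (𝓝 0) := by
  classical
  -- thresholds: for each k, a point beyond which a n ≤ a (k+1) / (k+1)
  have hN : ∀ k : ℕ, ∃ N, ∀ m ≥ N, a m ≤ a (k + 1) / (k + 1) := by
    intro k
    have hε : (0 : ℝ) < a (k + 1) / (k + 1) := div_pos (hpos _) (by positivity)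
    exact eventually_atTop.mp (h0.eventually (eventually_le_nhds hε))
  choose N hNspec using hN
  -- recursive block boundaries
  obtain ⟨f, hf0, hfsucc⟩ : ∃ f : ℕ → ℕ, f 0 = 0 ∧ ∀ k, f (k + 1) = max (f k + 1) (N k) :=
    ⟨fun k => Nat.rec (motive := fun _ => ℕ) 0 (fun j fj => max (fj + 1) (N j)) k,
      rfl, fun _ => rfl⟩
  have hfmono : StrictMono f := strictMono_nat_of_lt_succ fun k => by
    rw [hfsucc]; exact lt_of_lt_of_le (Nat.lt_succ_self _) (le_max_left _ _)
  have hfk : ∀ k, k ≤ f k := fun k => by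
    simpa using hfmono.le_apply
  -- the slow inverse
  set γ : ℕ → ℕ := fun n => Nat.findGreatest (fun k => f k ≤ n) n with hγdef
  have hP0 : ∀ n, f 0 ≤ n := fun n => by simp [hf0]
  have hle : ∀ n, γ n ≤ n := fun n => Nat.findGreatest_le n
  have hmono : Monotone γ := fun m n hmn =>
    Nat.findGreatest_mono (fun k hk => le_trans hk hmn) hmn
  have htop : Tendsto γ atTop atTop := by
    refine tendsto_atTop.2 fun K => eventually_atTop.2 ⟨f K, fun n hn => ?_⟩
    exact Nat.le_findGreatest (le_trans (hfk K) hn) hn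
  have hspec : ∀ n, f (γ n) ≤ n := fun n =>
    Nat.findGreatest_spec (P := fun k => f k ≤ n) (Nat.zero_le n) (hP0 n)
  refine ⟨γ, hmono, hle, htop, ?_⟩
  -- squeeze
  have hbound : ∀ᶠ n in atTop, a n / a (γ n) ≤ 1 / (γ n : ℝ) := by
    filter_upwards [htop.eventually (eventually_ge_atTop 1)] with n hn
    obtain ⟨j, hj⟩ : ∃ j, γ n = j + 1 := ⟨γ n - 1, by omega⟩
    have h1 : N j ≤ n := le_trans (le_trans (le_max_right _ _) (hfsucc j ▸ hj ▸ hspec n)) le_rfl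
    have h2 : a n ≤ a (γ n) / (γ n : ℝ) := by
      rw [hj]; push_cast; exact hNspec j n h1
    have hγpos : (0:ℝ) < (γ n : ℝ) := by rw [hj]; positivity
    rw [div_le_div_iff₀ (hpos _) hγpos]
    calc a n * (γ n : ℝ) ≤ (a (γ n) / (γ n : ℝ)) * (γ n : ℝ) := by
          apply mul_le_mul_of_nonneg_right h2 (by positivity)
      _ = a (γ n) := by
          field_simp
      _ = 1 * a (γ n) := (one_mul _).symm
  have hg0 : Tendsto (fun n => 1 / (γ n : ℝ)) atTop (𝓝 0) := by
    exact (tendsto_one_div_atTop_nhds_zero_nat : Tendsto (fun n : ℕ => 1 / (n : ℝ)) atTop (𝓝 0)).comp htop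
  refine squeeze_zero' ?_ hbound hg0
  filter_upwards with n
  exact div_nonneg (hpos n).le (hpos _).le
end

section
/- Let p and q be primes (possibly equal) and let ψ_{q,p} : ℤ_p → ℤ_q send ∑ d_n p^n (each d_n ∈ {0,...,p−1}) to ∑ d_n q^n. Then ψ_{q,p} is Hölder continuous with exponent log_p q: |ψ_{q,p}(a) − ψ_{q,p}(b)|_q ≤ |a − b|_p^{log_p q} for all a, b ∈ ℤ_p; moreover this inequality is an equality for all a, b if and only if p ≤ q. -/
open Filter Topology

/-- The space-change map `ψ_{q,p} : ℤ_p → ℤ_q`, sending `∑ d_n p^n` to `∑ d_n q^n`.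
The `n`-th base-`p` digit of `z` is `z.appr (n+1) / p^n ∈ {0,...,p−1}`. -/
noncomputable def psi (p q : ℕ) [Fact p.Prime] [Fact q.Prime] (z : ℤ_[p]) : ℤ_[q] :=
  ∑' n : ℕ, ((z.appr (n + 1) / p ^ n : ℕ) : ℤ_[q]) * (q : ℤ_[q]) ^ n

namespace Stmt16Aux

variable {p q : ℕ} [Fact p.Prime] [Fact q.Prime]

/-- The `n`-th term of the series defining `psi`. -/
noncomputable def trm (q : ℕ) [Fact q.Prime] {p : ℕ} [Fact p.Prime] (z : ℤ_[p]) (n : ℕ) :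
    ℤ_[q] :=
  ((z.appr (n + 1) / p ^ n : ℕ) : ℤ_[q]) * (q : ℤ_[q]) ^ n

lemma psi_eq_tsum (z : ℤ_[p]) : psi p q z = ∑' n, trm q z n := rfl

lemma digit_lt (z : ℤ_[p]) (n : ℕ) : z.appr (n + 1) / p ^ n < p := by
  have hp : 0 < p ^ n := pow_pos (Fact.out : p.Prime).pos n
  rw [Nat.div_lt_iff_lt_mul hp]
  calc z.appr (n + 1) < p ^ (n + 1) := z.appr_lt _
    _ = p * p ^ n := by ring

lemma norm_trm_le (z : ℤ_[p]) (n : ℕ) : ‖trm q z n‖ ≤ ((q : ℝ)⁻¹) ^ n := by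
  unfold trm
  rw [norm_mul, norm_pow, PadicInt.norm_p]
  exact mul_le_of_le_one_left (by positivity) (PadicInt.norm_le_one _)

lemma summable_trm (z : ℤ_[p]) : Summable (trm q z) := by
  have hq1 : (1 : ℝ) < q := by exact_mod_cast (Fact.out : q.Prime).one_lt
  exact Summable.of_norm_bounded
    (summable_geometric_of_lt_one (by positivity) (inv_lt_one_of_one_lt₀ hq1)) (norm_trm_le z)

lemma psi_sub_eq_tsum (a b : ℤ_[p]) :
    psi p q a - psi p q b = ∑' n, (trm q a n - trm q b n) := by
  rw [psi_eq_tsum, psi_eq_tsum]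
  exact (Summable.tsum_sub (f := trm q a) (g := trm q b) (summable_trm a) (summable_trm b)).symm

lemma inv_pow_eq_zpow (n : ℕ) : ((q : ℝ)⁻¹) ^ n = (q : ℝ) ^ (-(n : ℤ)) := by
  rw [inv_pow, ← zpow_natCast, ← zpow_neg]

lemma nat_eq_of_mem_span {x y : ℕ} {n : ℕ} (hx : x < p ^ n) (hy : y < p ^ n)
    (h : ((x : ℤ_[p]) - y) ∈ Ideal.span {(p : ℤ_[p]) ^ n}) : x = y := by
  have h1 : ((((x : ℤ) - y : ℤ)) : ℤ_[p]) ∈ Ideal.span {(p : ℤ_[p]) ^ n} := by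
    push_cast
    exact h
  have h2 : ((p : ℤ)) ^ n ∣ ((x : ℤ) - y) := by
    have hnorm := (PadicInt.norm_le_pow_iff_mem_span_pow _ n).mpr h1
    have := PadicInt.norm_int_le_pow_iff_dvd.mp hnorm
    exact_mod_cast this
  have hx' : (x : ℤ) < (p : ℤ) ^ n := by exact_mod_cast hx
  have hy' : (y : ℤ) < (p : ℤ) ^ n := by exact_mod_cast hy
  have h0x : (0 : ℤ) ≤ (x : ℤ) := Int.natCast_nonneg x
  have h0y : (0 : ℤ) ≤ (y : ℤ) := Int.natCast_nonneg y
  have := Int.eq_zero_of_abs_lt_dvd h2 (by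
    rw [abs_sub_lt_iff]
    constructor <;> omega)
  omega

lemma appr_eq_appr {a b : ℤ_[p]} {n : ℕ} (h : a - b ∈ Ideal.span {(p : ℤ_[p]) ^ n}) :
    a.appr n = b.appr n := by
  apply nat_eq_of_mem_span (a.appr_lt n) (b.appr_lt n)
  have ha := PadicInt.appr_spec n a
  have hb := PadicInt.appr_spec n b
  have hrw : ((a.appr n : ℤ_[p]) - b.appr n)
      = (b - b.appr n) - (a - a.appr n) + (a - b) := by ring
  rw [hrw]
  exact Ideal.add_mem _ (Ideal.sub_mem _ hb ha) h

lemma appr_natCast (m n : ℕ) (h : m < p ^ n) : ((m : ℤ_[p])).appr n = m := by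
  apply nat_eq_of_mem_span (PadicInt.appr_lt _ n) h
  have hs := PadicInt.appr_spec n (m : ℤ_[p])
  have hrw : ((((m : ℤ_[p]).appr n : ℕ) : ℤ_[p]) - (m : ℕ))
      = -((m : ℤ_[p]) - ((m : ℤ_[p]).appr n : ℕ)) := by ring
  rw [hrw]
  exact neg_mem hs

lemma span_mono {m n : ℕ} (h : m ≤ n) :
    (Ideal.span {(p : ℤ_[p]) ^ n} : Ideal ℤ_[p]) ≤ Ideal.span {(p : ℤ_[p]) ^ m} :=
  Ideal.span_singleton_le_span_singleton.mpr (pow_dvd_pow _ h)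

lemma digit_eq {a b : ℤ_[p]} {k : ℕ} (h : a - b ∈ Ideal.span {(p : ℤ_[p]) ^ k}) {n : ℕ}
    (hn : n < k) : a.appr (n + 1) / p ^ n = b.appr (n + 1) / p ^ n := by
  rw [appr_eq_appr (span_mono (show n + 1 ≤ k by omega) h)]

lemma trm_eq {a b : ℤ_[p]} {k : ℕ} (h : a - b ∈ Ideal.span {(p : ℤ_[p]) ^ k}) {n : ℕ}
    (hn : n < k) : trm q a n = trm q b n := by
  unfold trm
  rw [digit_eq h hn]

lemma norm_psi_sub_le (a b : ℤ_[p]) (k : ℕ) (h : a - b ∈ Ideal.span {(p : ℤ_[p]) ^ k}) :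
    ‖psi p q a - psi p q b‖ ≤ (q : ℝ) ^ (-(k : ℤ)) := by
  have hq1 : (1 : ℝ) < q := by exact_mod_cast (Fact.out : q.Prime).one_lt
  rw [psi_sub_eq_tsum]
  apply IsUltrametricDist.norm_tsum_le_of_forall_le_of_nonneg (by positivity)
  intro n
  rcases lt_or_ge n k with hn | hn
  · rw [trm_eq h hn, sub_self, norm_zero]
    positivity
  · calc ‖trm q a n - trm q b n‖ = ‖trm q a n + -(trm q b n)‖ := by rw [sub_eq_add_neg]
      _ ≤ max ‖trm q a n‖ ‖-(trm q b n)‖ := IsUltrametricDist.norm_add_le_max _ _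
      _ ≤ ((q : ℝ)⁻¹) ^ n := by
          rw [norm_neg]
          exact max_le (norm_trm_le _ _) (norm_trm_le _ _)
      _ ≤ (q : ℝ) ^ (-(k : ℤ)) := by
          rw [inv_pow_eq_zpow]
          exact zpow_le_zpow_right₀ hq1.le (by omega)

lemma rpow_eq (k : ℕ) :
    ((p : ℝ) ^ (-(k : ℤ))) ^ (Real.log q / Real.log p) = (q : ℝ) ^ (-(k : ℤ)) := by
  have hp1 : (1 : ℝ) < p := by exact_mod_cast (Fact.out : p.Prime).one_lt
  have hq1 : (1 : ℝ) < q := by exact_mod_cast (Fact.out : q.Prime).one_lt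
  have hp0 : (0 : ℝ) < p := by linarith
  have hq0 : (0 : ℝ) < q := by linarith
  have hlp : Real.log p ≠ 0 := ne_of_gt (Real.log_pos hp1)
  have hL : ((p : ℝ) ^ (-(k : ℤ))) ^ (Real.log q / Real.log p)
      = Real.exp (Real.log ((p : ℝ) ^ (-(k : ℤ))) * (Real.log q / Real.log p)) :=
    Real.rpow_def_of_pos (zpow_pos hp0 _) _
  have hR : (q : ℝ) ^ (-(k : ℤ)) = Real.exp (Real.log ((q : ℝ) ^ (-(k : ℤ)))) :=
    (Real.exp_log (zpow_pos hq0 _)).symm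
  rw [hL, hR]
  congr 1
  rw [Real.log_zpow, Real.log_zpow]
  push_cast
  field_simp

lemma norm_psi_sub_eq_of_le (hpq : p ≤ q) (a b : ℤ_[p]) (k : ℕ)
    (hmem : a - b ∈ Ideal.span {(p : ℤ_[p]) ^ k})
    (hnmem : a - b ∉ Ideal.span {(p : ℤ_[p]) ^ (k + 1)}) :
    ‖psi p q a - psi p q b‖ = (q : ℝ) ^ (-(k : ℤ)) := by
  have hq1 : (1 : ℝ) < q := by exact_mod_cast (Fact.out : q.Prime).one_lt
  have hak : a.appr k = b.appr k := appr_eq_appr hmem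
  -- the k-th digits differ
  have hdk : a.appr (k + 1) / p ^ k ≠ b.appr (k + 1) / p ^ k := by
    intro hd
    apply hnmem
    have hmod : ∀ z : ℤ_[p], z.appr (k + 1) = p ^ k * (z.appr (k + 1) / p ^ k) + z.appr k := by
      intro z
      have hdvd : p ^ k ∣ z.appr (k + 1) - z.appr k :=
        z.dvd_appr_sub_appr k (k + 1) (Nat.le_succ k)
      have hmo : z.appr k % p ^ k = z.appr (k + 1) % p ^ k :=
        (Nat.modEq_iff_dvd' (z.appr_mono (Nat.le_succ k))).mpr hdvd
      have h1 : z.appr (k + 1) % p ^ k = z.appr k := by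
        rw [← hmo, Nat.mod_eq_of_lt (z.appr_lt k)]
      conv_lhs => rw [← Nat.div_add_mod (z.appr (k + 1)) (p ^ k)]
      rw [h1]
    have happr : a.appr (k + 1) = b.appr (k + 1) := by
      rw [hmod a, hmod b, hd, hak]
    have ha := PadicInt.appr_spec (k + 1) a
    have hb := PadicInt.appr_spec (k + 1) b
    have hrw : a - b = (a - (a.appr (k + 1) : ℤ_[p])) - (b - (b.appr (k + 1) : ℤ_[p])) := by
      rw [happr]; ring
    rw [hrw]
    exact Ideal.sub_mem _ ha hb
  -- set up the series
  set t : ℕ → ℤ_[q] := fun n => trm q a n - trm q b n with ht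
  have hsum_t : Summable t :=
    Summable.sub (f := trm q a) (g := trm q b) (summable_trm a) (summable_trm b)
  have hg : HasSum (fun n => if n = k then t k else 0) (t k) := hasSum_ite_eq k (t k)
  set h2 : ℕ → ℤ_[q] := fun n => if n = k then 0 else t n with hh2
  have hsum_h : Summable h2 := by
    have hrw : h2 = fun n => t n - (if n = k then t k else 0) := by
      funext n
      by_cases hn : n = k <;> simp [hh2, hn]
    rw [hrw]
    exact Summable.sub (f := t) (g := fun n => if n = k then t k else 0) hsum_t hg.summable
  have hts : ∑' n, t n = t k + ∑' n, h2 n := by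
    calc ∑' n, t n = ∑' n, ((if n = k then t k else 0) + h2 n) := by
          apply tsum_congr
          intro n
          by_cases hn : n = k <;> simp [hh2, hn]
      _ = (∑' n, if n = k then t k else 0) + ∑' n, h2 n :=
          Summable.tsum_add (f := fun n => if n = k then t k else 0) (g := h2) hg.summable hsum_h
      _ = t k + ∑' n, h2 n := by rw [hg.tsum_eq]
  -- norm of the k-th term
  set c : ℤ := ((a.appr (k + 1) / p ^ k : ℕ) : ℤ) - ((b.appr (k + 1) / p ^ k : ℕ) : ℤ) with hc
  have hc0 : c ≠ 0 := by
    simp only [hc, sub_ne_zero]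
    exact_mod_cast hdk
  have hcabs : |c| < (q : ℤ) := by
    have h1 : ((a.appr (k + 1) / p ^ k : ℕ) : ℤ) < p := by exact_mod_cast digit_lt a k
    have h2' : ((b.appr (k + 1) / p ^ k : ℕ) : ℤ) < p := by exact_mod_cast digit_lt b k
    have h01 : (0 : ℤ) ≤ ((a.appr (k + 1) / p ^ k : ℕ) : ℤ) := Int.natCast_nonneg _
    have h02 : (0 : ℤ) ≤ ((b.appr (k + 1) / p ^ k : ℕ) : ℤ) := Int.natCast_nonneg _
    have hpq' : (p : ℤ) ≤ (q : ℤ) := by exact_mod_cast hpq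
    rw [hc, abs_sub_lt_iff]
    constructor <;> linarith
  have hndvd : ¬ (q : ℤ) ∣ c := by
    intro hdvd
    have := Int.le_of_dvd (abs_pos.mpr hc0) ((dvd_abs _ _).mpr hdvd)
    omega
  have hcnorm : ‖((c : ℤ) : ℤ_[q])‖ = 1 := by
    refine le_antisymm (PadicInt.norm_le_one _) ?_
    by_contra hlt
    push_neg at hlt
    exact hndvd ((PadicInt.norm_int_lt_one_iff_dvd c).mp hlt)
  have htk : t k = ((c : ℤ) : ℤ_[q]) * (q : ℤ_[q]) ^ k := by
    have e1 : t k = trm q a k - trm q b k := rfl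
    rw [e1, hc]
    unfold trm
    generalize a.appr (k + 1) / p ^ k = da
    generalize b.appr (k + 1) / p ^ k = db
    push_cast
    ring
  have htknorm : ‖t k‖ = (q : ℝ) ^ (-(k : ℤ)) := by
    rw [htk, norm_mul, hcnorm, one_mul, PadicInt.norm_p_pow]
  -- norm of the tail
  have hH : ‖∑' n, h2 n‖ ≤ (q : ℝ) ^ (-((k : ℤ) + 1)) := by
    apply IsUltrametricDist.norm_tsum_le_of_forall_le_of_nonneg (by positivity)
    intro n
    rcases lt_trichotomy n k with hn | hn | hn
    · have : h2 n = 0 := by simp [hh2, (by omega : n ≠ k), ht, trm_eq hmem hn]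
      rw [this, norm_zero]; positivity
    · have : h2 n = 0 := by simp [hh2, hn]
      rw [this, norm_zero]; positivity
    · have hrw : h2 n = t n := by
        simp only [hh2]
        rw [if_neg (by omega : ¬ n = k)]
      rw [hrw, ht]
      calc ‖trm q a n - trm q b n‖ = ‖trm q a n + -(trm q b n)‖ := by rw [sub_eq_add_neg]
        _ ≤ max ‖trm q a n‖ ‖-(trm q b n)‖ := IsUltrametricDist.norm_add_le_max _ _
        _ ≤ ((q : ℝ)⁻¹) ^ n := by
            rw [norm_neg]
            exact max_le (norm_trm_le _ _) (norm_trm_le _ _)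
        _ ≤ (q : ℝ) ^ (-((k : ℤ) + 1)) := by
            rw [inv_pow_eq_zpow]
            exact zpow_le_zpow_right₀ hq1.le (by omega)
  have hHlt : ‖∑' n, h2 n‖ < ‖t k‖ := by
    rw [htknorm]
    exact lt_of_le_of_lt hH (zpow_lt_zpow_right₀ hq1 (by omega))
  rw [psi_sub_eq_tsum]
  have : ∑' n, (trm q a n - trm q b n) = t k + ∑' n, h2 n := hts
  rw [this, IsUltrametricDist.norm_add_eq_max_of_norm_ne_norm (ne_of_lt hHlt).symm,
    max_eq_left hHlt.le, htknorm]

end Stmt16Aux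

open Stmt16Aux in
/-- `ψ_{q,p}` is Hölder continuous with exponent `log_p q`:
`|ψ_{q,p}(a) − ψ_{q,p}(b)|_q ≤ |a − b|_p^{log_p q}` for all `a, b ∈ ℤ_p`, and this
inequality is an equality for all `a, b` if and only if `p ≤ q`. -/
theorem stmt16 (p q : ℕ) [Fact p.Prime] [Fact q.Prime] :
    (∀ a b : ℤ_[p], ‖psi p q a - psi p q b‖ ≤ ‖a - b‖ ^ (Real.log q / Real.log p)) ∧
    ((∀ a b : ℤ_[p], ‖psi p q a - psi p q b‖ = ‖a - b‖ ^ (Real.log q / Real.log p)) ↔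
      p ≤ q) := by
  have hp1 : (1 : ℝ) < p := by exact_mod_cast (Fact.out : p.Prime).one_lt
  have hq1 : (1 : ℝ) < q := by exact_mod_cast (Fact.out : q.Prime).one_lt
  have e_pos : 0 < Real.log q / Real.log p :=
    div_pos (Real.log_pos hq1) (Real.log_pos hp1)
  have key : ∀ a b : ℤ_[p], a ≠ b → ∃ k : ℕ, ‖a - b‖ = (p : ℝ) ^ (-(k : ℤ)) ∧
      a - b ∈ Ideal.span {(p : ℤ_[p]) ^ k} ∧ a - b ∉ Ideal.span {(p : ℤ_[p]) ^ (k + 1)} := by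
    intro a b hab
    have hz : a - b ≠ 0 := sub_ne_zero.mpr hab
    set k : ℕ := (a - b).valuation with hk
    have hval : ((k : ℤ)) = (a - b).valuation := rfl
    have hnorm : ‖a - b‖ = (p : ℝ) ^ (-(k : ℤ)) := by
      rw [PadicInt.norm_eq_zpow_neg_valuation hz]
    refine ⟨k, hnorm, (PadicInt.norm_le_pow_iff_mem_span_pow _ _).mp (le_of_eq hnorm), ?_⟩
    intro hmem
    have hle := (PadicInt.norm_le_pow_iff_mem_span_pow _ _).mpr hmem
    rw [hnorm] at hle
    have := (zpow_le_zpow_iff_right₀ hp1).mp hle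
    omega
  refine ⟨?_, ?_, ?_⟩
  · intro a b
    by_cases hab : a = b
    · simp [hab, Real.zero_rpow (ne_of_gt e_pos)]
    · obtain ⟨k, hnorm, hmem, -⟩ := key a b hab
      rw [hnorm, rpow_eq]
      exact norm_psi_sub_le a b k hmem
  · intro heq
    by_contra hqp
    push_neg at hqp
    have h0 : psi p q (0 : ℤ_[p]) = 0 := by
      unfold psi
      have hz : ∀ n : ℕ, (((0 : ℤ_[p]).appr (n + 1) / p ^ n : ℕ) : ℤ_[q]) * (q : ℤ_[q]) ^ n
          = 0 := by
        intro n
        have : (0 : ℤ_[p]) = ((0 : ℕ) : ℤ_[p]) := by simp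
        rw [this, appr_natCast 0 (n + 1) (pow_pos (Fact.out : p.Prime).pos _)]
        simp
      rw [tsum_congr hz, tsum_zero]
    have hqv : psi p q ((q : ℕ) : ℤ_[p]) = ((q : ℕ) : ℤ_[q]) := by
      unfold psi
      rw [tsum_eq_single 0]
      · have h1 : ((q : ℕ) : ℤ_[p]).appr 1 = q := by
          apply appr_natCast
          simpa using hqp
        simp [h1]
      · intro n hn
        obtain ⟨m, rfl⟩ : ∃ m, n = m + 1 := ⟨n - 1, by omega⟩
        have hap : ((q : ℕ) : ℤ_[p]).appr (m + 1 + 1) = q := by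
          apply appr_natCast
          calc q < p := hqp
            _ ≤ p ^ (m + 2) := Nat.le_self_pow (by omega) p
        have hdiv : q / p ^ (m + 1) = 0 := by
          apply Nat.div_eq_of_lt
          calc q < p := hqp
            _ ≤ p ^ (m + 1) := Nat.le_self_pow (by omega) p
        rw [hap, hdiv]
        simp
    have heqq := heq ((q : ℕ) : ℤ_[p]) 0
    rw [h0, hqv, sub_zero, sub_zero] at heqq
    have hl : ‖((q : ℕ) : ℤ_[q])‖ = (q : ℝ)⁻¹ := PadicInt.norm_p
    have hr : ‖((q : ℕ) : ℤ_[p])‖ = 1 := by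
      refine le_antisymm (PadicInt.norm_le_one _) ?_
      by_contra hlt
      push_neg at hlt
      have hcast : ((q : ℕ) : ℤ_[p]) = (((q : ℕ) : ℤ) : ℤ_[p]) := by push_cast; rfl
      rw [hcast] at hlt
      have hdvd := (PadicInt.norm_int_lt_one_iff_dvd _).mp hlt
      have hdvd' : p ∣ q := by exact_mod_cast hdvd
      have := Nat.le_of_dvd (Fact.out : q.Prime).pos hdvd'
      omega
    rw [hl, hr, Real.one_rpow] at heqq
    have : (q : ℝ) = 1 := by
      rw [← inv_inv (q : ℝ), heqq, inv_one]
    linarith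
  · intro hpq a b
    by_cases hab : a = b
    · simp [hab, Real.zero_rpow (ne_of_gt e_pos)]
    · obtain ⟨k, hnorm, hmem, hnmem⟩ := key a b hab
      rw [hnorm, rpow_eq]
      exact norm_psi_sub_eq_of_le hpq a b k hmem hnmem
end

section
/- Fix p ≥ 2, an integral domain R of characteristic coprime to p with units r_0,...,r_{p−1}, and define the sorting operator L on the R-module of locally constant functions ℤ_p → R by L{φ}(z) = (1/p)∑_{k=0}^{p−1} r_k φ(pz + k). Then for all m, n ≥ 0 and k ∈ {0,...,p^n − 1}: if m < n, L^m applied to the indicator of {z ≡ k mod p^n} equals (r_0^m κ([k]_{p^m})/p^m) times the indicator of {z ≡ θ_p^{∘m}(k) mod p^{n−m}}; and if m ≥ n, it equals the constant (r_0^n κ(k)/p^n)·((1/p)∑_{j=0}^{p−1} r_j)^{m−n}. -/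
/-- The digit stream of `p·z + j`. -/
def consDigit {p : ℕ} (j : Fin p) (z : ℕ → Fin p) : ℕ → Fin p
  | 0 => j
  | i + 1 => z i

/-- The sorting operator `L{φ}(z) = (1/p)∑_{k<p} r_k φ(pz+k)` on functions `ℤ_p → K`. -/
def sortOp {p : ℕ} {K : Type*} [Field K] (r : Fin p → K)
    (φ : (ℕ → Fin p) → K) : (ℕ → Fin p) → K :=
  fun z => (p : K)⁻¹ * ∑ j : Fin p, r j * φ (consDigit j z)

/-- `κ(m) = ∏_{j=1}^{p−1}(r_j/r_0)^{#_{p:j}(m)}` for a natural number `m`. -/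
def kappaN {p : ℕ} [NeZero p] {K : Type*} [Field K] (r : Fin p → K) (m : ℕ) : K :=
  ∏ j ∈ Finset.univ.filter (fun j : Fin p => j ≠ 0),
    (r j / r 0) ^ ((Nat.digits p m).count (j : ℕ))

/-- The `i`-th base-`p` digit of `k`, as an element of `Fin p`. -/
def digitFin (p : ℕ) [NeZero p] (k i : ℕ) : Fin p :=
  ⟨k / p ^ i % p, Nat.mod_lt _ (NeZero.pos p)⟩

section aux

variable {p : ℕ} [NeZero p] {K : Type*} [Field K]

lemma digitFin_div (k i : ℕ) : digitFin p (k / p) i = digitFin p k (i + 1) := by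
  apply Fin.ext
  simp [digitFin, Nat.div_div_eq_div_mul, pow_succ']

lemma trunc_consDigit (j : Fin p) (z : ℕ → Fin p) (n : ℕ) :
    trunc (consDigit j z) (n + 1) = trunc z n * p + j := by
  unfold trunc
  rw [Finset.sum_range_succ']
  simp only [consDigit]
  rw [Finset.sum_mul]
  congr 1
  · exact Finset.sum_congr rfl fun i _ => by rw [pow_succ]; ring
  · simp

lemma kappaN_zero (r : Fin p → K) : kappaN r 0 = 1 := by
  unfold kappaN; simp

lemma kappaN_cons (hp : 2 ≤ p) (r : Fin p → K) (hr : ∀ j, r j ≠ 0) (N : ℕ) :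
    kappaN r N = r (digitFin p N 0) / r 0 * kappaN r (N / p) := by
  have hd0 : digitFin p N 0 = ⟨N % p, Nat.mod_lt _ (NeZero.pos p)⟩ := by
    apply Fin.ext; simp [digitFin]
  rcases Nat.eq_zero_or_pos N with h | h
  · subst h
    have : (⟨0 % p, Nat.mod_lt _ (NeZero.pos p)⟩ : Fin p) = 0 := by
      apply Fin.ext; simp
    rw [hd0, this]
    simp [kappaN_zero, div_self (hr 0)]
  · unfold kappaN
    rw [Nat.digits_def' hp h]
    simp only [List.count_cons, pow_add]
    rw [Finset.prod_mul_distrib]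
    rw [mul_comm, hd0]
    congr 1
    set d : Fin p := ⟨N % p, Nat.mod_lt _ (NeZero.pos p)⟩ with hdd
    have hcond : ∀ j : Fin p, ((N % p : ℕ) == (j : ℕ)) = true ↔ j = d := by
      intro j
      rw [beq_iff_eq]
      constructor
      · intro hh; exact Fin.ext (by simp [hdd, ← hh])
      · intro hh; subst hh; rfl
    have : ∀ j : Fin p,
        (r j / r 0) ^ (if ((N % p : ℕ) == (j : ℕ)) = true then 1 else 0)
          = if j = d then r j / r 0 else 1 := by
      intro j
      by_cases hj : j = d
      · simp [hj, (hcond j).mpr hj, hdd]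
      · have : ¬(((N % p : ℕ) == (j : ℕ)) = true) := fun hc => hj ((hcond j).mp hc)
        simp [hj, this]
    rw [Finset.prod_congr rfl (fun j _ => this j)]
    rw [Finset.prod_ite_eq' ]
    by_cases hd : d = 0
    · rw [if_neg (by simp [hd])]
      rw [hd]
      exact (div_self (hr 0)).symm
    · rw [if_pos (by simp [hd])]

lemma kappa_prod (hp : 2 ≤ p) (r : Fin p → K) (hr : ∀ j, r j ≠ 0) (m k : ℕ) :
    r 0 ^ m * kappaN r (k % p ^ m) = ∏ i ∈ Finset.range m, r (digitFin p k i) := by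
  induction m generalizing k with
  | zero => simp [kappaN_zero, Nat.mod_one]
  | succ m ih =>
    rw [Finset.prod_range_succ']
    have e1 : ∀ i : ℕ, i ∈ Finset.range m → r (digitFin p k (i + 1)) = r (digitFin p (k / p) i) :=
      fun i _ => by rw [digitFin_div]
    rw [Finset.prod_congr rfl e1, ← ih (k / p)]
    have hmod : k % p ^ (m + 1) % p = k % p := Nat.mod_mod_of_dvd _ (dvd_pow_self p (by omega))
    have hdiv : k % p ^ (m + 1) / p = k / p % p ^ m := by
      rw [pow_succ']; exact Nat.mod_mul_right_div_self k p (p ^ m)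
    have hd : digitFin p (k % p ^ (m + 1)) 0 = digitFin p k 0 := by
      apply Fin.ext; simp [digitFin, hmod]
    rw [kappaN_cons hp r hr (k % p ^ (m + 1)), hd, hdiv]
    have h0 : r 0 ≠ 0 := hr 0
    field_simp
    ring

lemma sortOp_indicator (hp : 2 ≤ p) (r : Fin p → K) (n k : ℕ) :
    sortOp r (fun z => if trunc z (n + 1) = k then (1 : K) else 0)
      = fun z => (p : K)⁻¹ * r (digitFin p k 0) * (if trunc z n = k / p then (1 : K) else 0) := by
  have hp0 : 0 < p := by omega
  funext z
  unfold sortOp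
  rw [mul_assoc]
  congr 1
  have key : ∀ j : Fin p,
      (trunc (consDigit j z) (n + 1) = k) ↔ (j = digitFin p k 0 ∧ trunc z n = k / p) := by
    intro j
    rw [trunc_consDigit]
    have hd0 : (digitFin p k 0 : ℕ) = k % p := by simp [digitFin]
    constructor
    · intro h
      have h' : (j : ℕ) + p * trunc z n = k := by rw [← h]; ring
      obtain ⟨h1, h2⟩ := (Nat.div_mod_unique hp0).mpr ⟨h', j.isLt⟩
      refine ⟨Fin.ext ?_, h1.symm⟩
      omega
    · rintro ⟨hj, ht⟩
      rw [ht, hj, hd0]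
      exact Nat.div_add_mod' k p
  by_cases h : trunc z n = k / p
  · simp only [key, h, and_true, if_pos rfl, mul_one]
    simp [mul_ite]
  · simp only [key, h, and_false, if_false, if_neg h, mul_zero]
    simp

lemma sortOp_smul (r : Fin p → K) (c : K) (φ : (ℕ → Fin p) → K) :
    sortOp r (fun z => c * φ z) = fun z => c * sortOp r φ z := by
  funext z
  unfold sortOp
  have : ∑ j : Fin p, r j * (c * φ (consDigit j z))
      = c * ∑ j : Fin p, r j * φ (consDigit j z) := by
    rw [Finset.mul_sum]; exact Finset.sum_congr rfl fun j _ => by ring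
  rw [this]; ring

lemma iter_smul (r : Fin p → K) (c : K) (φ : (ℕ → Fin p) → K) (m : ℕ) :
    (sortOp r)^[m] (fun z => c * φ z) = fun z => c * (sortOp r)^[m] φ z := by
  induction m generalizing φ with
  | zero => rfl
  | succ m ih =>
      rw [Function.iterate_succ_apply, Function.iterate_succ_apply, sortOp_smul, ih]

lemma sortOp_const (r : Fin p → K) (c : K) :
    sortOp r (fun _ => c) = fun _ => ((p : K)⁻¹ * ∑ j : Fin p, r j) * c := by
  funext z
  unfold sortOp
  rw [← Finset.sum_mul]
  ring

lemma iter_const (r : Fin p → K) (c : K) (t : ℕ) :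
    (sortOp r)^[t] (fun _ => c) = fun _ => ((p : K)⁻¹ * ∑ j : Fin p, r j) ^ t * c := by
  induction t generalizing c with
  | zero => simp
  | succ t ih =>
      rw [Function.iterate_succ_apply, sortOp_const, ih]
      funext z
      ring

lemma iter_ind (hp : 2 ≤ p) (hpK : (p : K) ≠ 0) (r : Fin p → K) (m n k : ℕ) (hm : m ≤ n) :
    (sortOp r)^[m] (fun z => if trunc z n = k then (1 : K) else 0)
      = fun z => (∏ i ∈ Finset.range m, r (digitFin p k i)) / (p : K) ^ m *
          (if trunc z (n - m) = k / p ^ m then (1 : K) else 0) := by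
  induction m generalizing n k with
  | zero => funext z; simp
  | succ m ih =>
    obtain ⟨n', rfl⟩ : ∃ n', n = n' + 1 := ⟨n - 1, by omega⟩
    rw [Function.iterate_succ_apply, sortOp_indicator hp r n' k, iter_smul,
      ih n' (k / p) (by omega)]
    funext z
    have e1 : ∀ i : ℕ, i ∈ Finset.range m → r (digitFin p (k / p) i) = r (digitFin p k (i + 1)) :=
      fun i _ => by rw [digitFin_div]
    rw [Finset.prod_congr rfl e1]
    have e2 : k / p / p ^ m = k / p ^ (m + 1) := by
      rw [Nat.div_div_eq_div_mul, ← pow_succ']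
    have e3 : n' + 1 - (m + 1) = n' - m := by omega
    rw [e2, e3, Finset.prod_range_succ']
    beta_reduce
    split_ifs with hX
    · rw [mul_one, mul_one, pow_succ]
      field_simp
    · simp

end aux

/-- Action of the iterates of the sorting operator on indicators of congruence classes:
for `k < p^n`, if `m < n` then `L^m[z ≡ k mod p^n] = (r_0^m κ([k]_{p^m})/p^m)·[z ≡ θ_p^{∘m}(k)
mod p^{n−m}]`, while for `m ≥ n` it is the constant `(r_0^n κ(k)/p^n)·((1/p)∑_j r_j)^{m−n}`. -/
theorem stmt18 {p : ℕ} [NeZero p] (hp : 2 ≤ p) {K : Type*} [Field K]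
    (hpK : (p : K) ≠ 0) (r : Fin p → K) (hr : ∀ j, r j ≠ 0)
    (m n k : ℕ) (hk : k < p ^ n) :
    (m < n →
      (sortOp r)^[m] (fun z => if trunc z n = k then (1 : K) else 0)
        = fun z => r 0 ^ m * kappaN r (k % p ^ m) / (p : K) ^ m
            * (if trunc z (n - m) = k / p ^ m then (1 : K) else 0)) ∧
    (n ≤ m →
      (sortOp r)^[m] (fun z => if trunc z n = k then (1 : K) else 0)
        = fun _ => r 0 ^ n * kappaN r k / (p : K) ^ n
            * ((p : K)⁻¹ * ∑ j : Fin p, r j) ^ (m - n)) := by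
  constructor
  · intro hmn
    rw [iter_ind hp hpK r m n k (le_of_lt hmn), ← kappa_prod hp r hr m k]
  · intro hnm
    rw [show m = (m - n) + n from (Nat.sub_add_cancel hnm).symm,
      Function.iterate_add_apply, iter_ind hp hpK r n n k le_rfl]
    have h1 : k / p ^ n = 0 := Nat.div_eq_of_lt hk
    have h2 : ∀ z : ℕ → Fin p, trunc z (n - n) = 0 := by
      intro z; simp [trunc]
    have : (fun z : ℕ → Fin p =>
        (∏ i ∈ Finset.range n, r (digitFin p k i)) / (p : K) ^ n *
          (if trunc z (n - n) = k / p ^ n then (1 : K) else 0))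
        = fun _ : ℕ → Fin p => (∏ i ∈ Finset.range n, r (digitFin p k i)) / (p : K) ^ n := by
      funext z
      rw [h1, if_pos (h2 z), mul_one]
    rw [this, iter_const]
    funext z
    rw [← kappa_prod hp r hr n k, Nat.mod_eq_of_lt hk]
    have : (m - n) + n - n = m - n := by omega
    rw [this]
    ring
end

section
/- With L as above and α(0) = (1/p)∑_{j=0}^{p−1} r_j, suppose 1 − α(0) is invertible in Frac(R). Then 1 − L is invertible on the space of Frac(R)-valued Schwartz–Bruhat functions on ℤ_p, and for n ≥ 0, k ∈ {0,...,p^n−1}, the inverse sends the indicator of {z ≡ k mod p^n} to S_{n,k}(z) = (1/(1−α(0)))·(r_0^n κ(k)/p^n) + ∑_{m=0}^{n−1} (r_0^m κ([k]_{p^m})/p^m)·[z ≡ θ_p^{∘m}(k) mod p^{n−m}]. In particular (1 − L){S_{n,k}}(z) = [z ≡ k mod p^n] identically. -/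
/-- A function is Schwartz–Bruhat (locally constant) if it depends on finitely many digits. -/
def IsSB {p : ℕ} {K : Type*} (φ : (ℕ → Fin p) → K) : Prop :=
  ∃ N : ℕ, ∀ z w : ℕ → Fin p, (∀ i < N, z i = w i) → φ z = φ w

/-- The explicit preimage `S_{n,k}` of the indicator `[z ≡ k mod p^n]` under `1 − L`. -/
def Sfun {p : ℕ} [NeZero p] {K : Type*} [Field K] (r : Fin p → K) (n k : ℕ) :
    (ℕ → Fin p) → K :=
  fun z =>
    (1 - (p : K)⁻¹ * ∑ j : Fin p, r j)⁻¹ * (r 0 ^ n * kappaN r k / (p : K) ^ n)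
      + ∑ m ∈ Finset.range n,
          r 0 ^ m * kappaN r (k % p ^ m) / (p : K) ^ m
            * (if trunc z (n - m) = k / p ^ m then (1 : K) else 0)




section
variable {p : ℕ}

lemma trunc_zero (z : ℕ → Fin p) : trunc z 0 = 0 := by simp [trunc]

lemma trunc_succ (z : ℕ → Fin p) (n : ℕ) :
    trunc z (n+1) = trunc z n + (z n : ℕ) * p ^ n := Finset.sum_range_succ _ _

lemma trunc_lt [NeZero p] (z : ℕ → Fin p) (n : ℕ) : trunc z n < p ^ n := by
  induction n with
  | zero => simp [trunc]
  | succ n ih =>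
    rw [trunc_succ, pow_succ]
    have h1 : (z n : ℕ) ≤ p - 1 := Nat.le_sub_one_of_lt (z n).isLt
    have hp := Nat.pos_of_ne_zero (NeZero.ne p)
    calc trunc z n + (z n : ℕ) * p ^ n < p ^ n + (z n : ℕ) * p ^ n := by omega
      _ ≤ p ^ n + (p - 1) * p ^ n := by
          have := Nat.mul_le_mul_right (p ^ n) h1; omega
      _ = p ^ n * p := by
          have h2 : 1 + (p - 1) = p := by omega
          calc p ^ n + (p - 1) * p ^ n = (1 + (p - 1)) * p ^ n := by ring
            _ = p * p ^ n := by rw [h2]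
            _ = p ^ n * p := mul_comm _ _

lemma trunc_congr {z w : ℕ → Fin p} {n : ℕ} (h : ∀ i < n, z i = w i) :
    trunc z n = trunc w n := by
  unfold trunc
  refine Finset.sum_congr rfl fun i hi => ?_
  rw [h i (Finset.mem_range.mp hi)]

lemma trunc_cons (j : Fin p) (z : ℕ → Fin p) (t : ℕ) :
    trunc (consDigit j z) (t+1) = (j : ℕ) + p * trunc z t := by
  unfold trunc
  rw [Finset.sum_range_succ' (fun i => ((consDigit j z i : ℕ)) * p ^ i) t]
  simp only [consDigit, pow_zero, mul_one, pow_succ]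
  rw [Finset.mul_sum, Nat.add_comm]
  congr 1
  refine Finset.sum_congr rfl fun i _ => by ring

lemma cons_head_tail (z : ℕ → Fin p) : consDigit (z 0) (fun i => z (i+1)) = z := by
  funext i; cases i <;> rfl

lemma trunc_digit [NeZero p] : ∀ (i N : ℕ) (z : ℕ → Fin p), i < N →
    trunc z N / p ^ i % p = (z i : ℕ) := by
  have hp := Nat.pos_of_ne_zero (NeZero.ne p)
  intro i
  induction i with
  | zero =>
    intro N z hN
    obtain ⟨t, rfl⟩ : ∃ t, N = t + 1 := ⟨N - 1, by omega⟩
    rw [← cons_head_tail z, trunc_cons]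
    simp only [pow_zero, Nat.div_one, cons_head_tail]
    rw [Nat.add_mul_mod_self_left, Nat.mod_eq_of_lt (z 0).isLt]
  | succ i ih =>
    intro N z hN
    obtain ⟨t, rfl⟩ : ∃ t, N = t + 1 := ⟨N - 1, by omega⟩
    rw [← cons_head_tail z, trunc_cons]
    simp only [cons_head_tail]
    rw [pow_succ', ← Nat.div_div_eq_div_mul]
    rw [Nat.add_mul_div_left _ _ hp, Nat.div_eq_of_lt (z 0).isLt, Nat.zero_add]
    exact ih t (fun k => z (k+1)) (by omega)
end


section
variable {p : ℕ} [NeZero p] {K : Type*} [Field K]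

lemma count_digits_step (hp : 2 ≤ p) {j : ℕ} (hj : j ≠ 0) (n : ℕ) :
    (Nat.digits p n).count j
      = (if n % p = j then 1 else 0) + (Nat.digits p (n / p)).count j := by
  rcases Nat.eq_zero_or_pos n with rfl | hn
  · simp [Ne.symm hj]
  · rw [Nat.digits_def' (by omega : 1 < p) hn, List.count_cons]
    by_cases h : n % p = j <;> simp [h, Nat.add_comm]

lemma count_digits_mod_pow (hp : 2 ≤ p) {j : ℕ} (hj : j ≠ 0) :
    ∀ (m k : ℕ), (Nat.digits p (k % p ^ (m+1))).count j
      = (Nat.digits p (k % p ^ m)).count j + (if (k / p ^ m) % p = j then 1 else 0) := by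
  intro m
  induction m with
  | zero =>
    intro k
    simp only [pow_zero, Nat.mod_one, Nat.digits_zero, List.count_nil, pow_one,
      Nat.div_one, Nat.zero_add]
    rw [count_digits_step hp hj (k % p)]
    have h1 : k % p % p = k % p := Nat.mod_mod_of_dvd k dvd_rfl
    have h2 : k % p / p = 0 := Nat.div_eq_of_lt (Nat.mod_lt _ (by omega))
    rw [h1, h2]
    simp [Nat.add_comm]
  | succ m ih =>
    intro k
    have hdvd : (p : ℕ) ∣ p ^ (m + 2) := dvd_pow_self p (by omega)
    have hdvd' : (p : ℕ) ∣ p ^ (m + 1) := dvd_pow_self p (by omega)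
    have e1 : k % p ^ (m+2) % p = k % p := Nat.mod_mod_of_dvd k hdvd
    have e2 : k % p ^ (m+2) / p = (k / p) % p ^ (m+1) := by
      rw [← Nat.mod_mul_right_div_self, ← pow_succ']
    have e3 : k % p ^ (m+1) % p = k % p := Nat.mod_mod_of_dvd k hdvd'
    have e4 : k % p ^ (m+1) / p = (k / p) % p ^ m := by
      rw [← Nat.mod_mul_right_div_self, ← pow_succ']
    have e5 : k / p / p ^ m = k / p ^ (m+1) := by
      rw [Nat.div_div_eq_div_mul, ← pow_succ']
    rw [count_digits_step hp hj (k % p ^ (m+2)), e1, e2, ih (k / p),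
      count_digits_step hp hj (k % p ^ (m+1)), e3, e4, e5]
    omega
end

section
variable {p : ℕ} [NeZero p] {K : Type*} [Field K]

lemma kappa_step (hp : 2 ≤ p) (r : Fin p → K) (hr0 : r 0 ≠ 0) (k m : ℕ) :
    r 0 * kappaN r (k % p ^ (m+1))
      = kappaN r (k % p ^ m) * r ⟨k / p ^ m % p, Nat.mod_lt _ (by omega)⟩ := by
  have hppos : 0 < p := by omega
  set v : ℕ := k / p ^ m % p with hv
  have hvlt : v < p := Nat.mod_lt _ hppos
  set d : Fin p := ⟨v, hvlt⟩ with hd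
  have hsplit : kappaN r (k % p ^ (m+1))
      = kappaN r (k % p ^ m)
        * ∏ j ∈ Finset.univ.filter (fun j : Fin p => j ≠ 0),
            (if v = (j : ℕ) then r j / r 0 else 1) := by
    unfold kappaN
    rw [← Finset.prod_mul_distrib]
    refine Finset.prod_congr rfl fun j hj => ?_
    rw [count_digits_mod_pow hp (by
      intro h0
      have : j = 0 := Fin.ext (by simpa using h0)
      exact (Finset.mem_filter.mp hj).2 this) m k, pow_add]
    congr 1
    have hc : (k / p ^ m % p = (j : ℕ)) ↔ (v = (j : ℕ)) := by rw [hv]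
    by_cases h : v = (j : ℕ) <;> simp [h, hc]
  rw [hsplit]
  by_cases hd0 : v = 0
  · have h1 : ∀ j ∈ Finset.univ.filter (fun j : Fin p => j ≠ 0),
        (if v = (j : ℕ) then r j / r 0 else 1) = 1 := by
      intro j hj
      have hj0 : j ≠ 0 := (Finset.mem_filter.mp hj).2
      have : v ≠ (j : ℕ) := by
        rw [hd0]; intro h; exact hj0 (Fin.ext h.symm)
      simp [this]
    rw [Finset.prod_congr rfl h1, Finset.prod_const_one, mul_one]
    have : r d = r 0 := by congr 1; exact Fin.ext hd0
    rw [this]; ring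
  · have hdne : d ≠ 0 := by intro h; exact hd0 (by simpa [hd] using congrArg Fin.val h)
    have hmem : d ∈ Finset.univ.filter (fun j : Fin p => j ≠ 0) := by
      simp [hdne]
    rw [Finset.prod_eq_single d (fun j hj hne => by
        have : v ≠ (j : ℕ) := by
          intro h; exact hne (Fin.ext (by simp [hd, ← h]))
        simp [this])
      (fun h => absurd hmem h)]
    have : v = (d : ℕ) := rfl
    rw [if_pos this]
    field_simp
end


set_option linter.unusedSectionVars false

section main
variable {p : ℕ} [NeZero p] {K : Type*} [Field K]

lemma cstep (hp : 2 ≤ p) (hpK : (p : K) ≠ 0) (r : Fin p → K) (hr : ∀ j, r j ≠ 0)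
    (k m : ℕ) :
    (p : K)⁻¹ * r ⟨k / p ^ m % p, Nat.mod_lt _ (by omega)⟩
        * (r 0 ^ m * kappaN r (k % p ^ m) / (p : K) ^ m)
      = r 0 ^ (m+1) * kappaN r (k % p ^ (m+1)) / (p : K) ^ (m+1) := by
  have hk := kappa_step hp r (hr 0) k m
  have hpm : ((p : K)) ^ m ≠ 0 := pow_ne_zero _ hpK
  field_simp
  linear_combination (-(r 0 ^ m) * (p : K) ^ m * (p : K)) * hk

lemma per_m (hp : 2 ≤ p) (hpK : (p : K) ≠ 0) (r : Fin p → K) (hr : ∀ j, r j ≠ 0)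
    (n k m : ℕ) (hm : m < n) (z : ℕ → Fin p) :
    (p : K)⁻¹ * ∑ j : Fin p, r j * ((r 0 ^ m * kappaN r (k % p ^ m) / (p : K) ^ m) *
        (if trunc (consDigit j z) (n - m) = k / p ^ m then (1:K) else 0))
      = (r 0 ^ (m+1) * kappaN r (k % p ^ (m+1)) / (p : K) ^ (m+1)) *
        (if trunc z (n - (m+1)) = k / p ^ (m+1) then (1:K) else 0) := by
  have hppos : 0 < p := by omega
  have hnm : n - m = (n - (m+1)) + 1 := by omega
  set t := trunc z (n - (m+1)) with ht
  set q := k / p ^ m with hq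
  have hdivdiv : k / p ^ (m+1) = q / p := by
    rw [hq, Nat.div_div_eq_div_mul, ← pow_succ]
  have hqd : q % p + p * (k / p ^ (m+1)) = q := by
    rw [hdivdiv]; exact Nat.mod_add_div q p
  set d : Fin p := ⟨q % p, Nat.mod_lt _ hppos⟩ with hd
  have key : ∀ j : Fin p,
      (trunc (consDigit j z) (n - m) = q) ↔ (j = d ∧ t = k / p ^ (m+1)) := by
    intro j
    rw [hnm, trunc_cons, ← ht]
    constructor
    · intro h
      have h1 : (j : ℕ) = q % p := by
        have h2 := congrArg (· % p) h
        simpa [Nat.add_mul_mod_self_left, Nat.mod_eq_of_lt j.isLt] using h2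
      refine ⟨Fin.ext h1, ?_⟩
      have hpt : p * t = p * (k / p ^ (m+1)) := by omega
      exact Nat.eq_of_mul_eq_mul_left hppos hpt
    · rintro ⟨rfl, h2⟩
      rw [h2]
      simpa [hd] using hqd
  have hsum : ∑ j : Fin p, r j * ((r 0 ^ m * kappaN r (k % p ^ m) / (p : K) ^ m) *
        (if trunc (consDigit j z) (n - m) = k / p ^ m then (1:K) else 0))
      = r d * ((r 0 ^ m * kappaN r (k % p ^ m) / (p : K) ^ m) *
        (if t = k / p ^ (m+1) then (1:K) else 0)) := by
    rw [show (∑ j : Fin p, r j * ((r 0 ^ m * kappaN r (k % p ^ m) / (p : K) ^ m) *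
        (if trunc (consDigit j z) (n - m) = k / p ^ m then (1:K) else 0)))
      = ∑ j : Fin p, (if j = d then r j * ((r 0 ^ m * kappaN r (k % p ^ m) / (p : K) ^ m) *
        (if t = k / p ^ (m+1) then (1:K) else 0)) else 0) from
      Finset.sum_congr rfl fun j _ => ?_]
    · rw [Finset.sum_ite_eq' Finset.univ d _, if_pos (Finset.mem_univ d)]
    · by_cases hjd : j = d
      · rw [if_pos hjd, hjd]
        by_cases h2 : t = k / p ^ (m+1)
        · have hcond : trunc (consDigit d z) (n - m) = k / p ^ m := by
            rw [← hq]; exact (key d).mpr ⟨rfl, h2⟩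
          rw [if_pos hcond, if_pos h2]
        · have hcond : ¬ trunc (consDigit d z) (n - m) = k / p ^ m := by
            rw [← hq]; intro h; exact h2 ((key d).mp h).2
          rw [if_neg hcond, if_neg h2, mul_zero, mul_zero]
      · rw [if_neg hjd]
        have hno : ¬ trunc (consDigit j z) (n - m) = k / p ^ m := by
          rw [← hq]; intro h; exact hjd ((key j).mp h).1
        rw [if_neg hno, mul_zero, mul_zero]
  rw [hsum]
  have hcs := cstep hp hpK r hr k m
  calc (p : K)⁻¹ * (r d * ((r 0 ^ m * kappaN r (k % p ^ m) / (p : K) ^ m) *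
        (if t = k / p ^ (m+1) then (1:K) else 0)))
      = ((p : K)⁻¹ * r d * (r 0 ^ m * kappaN r (k % p ^ m) / (p : K) ^ m)) *
        (if t = k / p ^ (m+1) then (1:K) else 0) := by ring
    _ = _ := by rw [hcs]

lemma sfun_spec (hp : 2 ≤ p) (hpK : (p : K) ≠ 0) (r : Fin p → K) (hr : ∀ j, r j ≠ 0)
    (hα : 1 - (p : K)⁻¹ * ∑ j : Fin p, r j ≠ 0) (n k : ℕ) (hk : k < p ^ n)
    (z : ℕ → Fin p) :
    Sfun r n k z - sortOp r (Sfun r n k) z = (if trunc z n = k then (1:K) else 0) := by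
  have hppos : 0 < p := by omega
  set α : K := (p : K)⁻¹ * ∑ j : Fin p, r j with hαdef
  set A : K := r 0 ^ n * kappaN r k / (p : K) ^ n with hA
  set f : ℕ → K := fun m => (r 0 ^ m * kappaN r (k % p ^ m) / (p : K) ^ m) *
      (if trunc z (n - m) = k / p ^ m then (1:K) else 0) with hf
  have hSfun : ∀ w : ℕ → Fin p, Sfun r n k w
      = (1 - α)⁻¹ * A + ∑ m ∈ Finset.range n,
          (r 0 ^ m * kappaN r (k % p ^ m) / (p : K) ^ m) *
            (if trunc w (n - m) = k / p ^ m then (1:K) else 0) := fun w => rfl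
  have hsort : sortOp r (Sfun r n k) z
      = α * ((1 - α)⁻¹ * A) + ∑ m ∈ Finset.range n, f (m+1) := by
    unfold sortOp
    calc (p:K)⁻¹ * ∑ j : Fin p, r j * Sfun r n k (consDigit j z)
        = (p:K)⁻¹ * ∑ j : Fin p, (r j * ((1 - α)⁻¹ * A)
            + ∑ m ∈ Finset.range n, r j * ((r 0 ^ m * kappaN r (k % p ^ m) / (p : K) ^ m) *
                (if trunc (consDigit j z) (n - m) = k / p ^ m then (1:K) else 0))) := by
          congr 1
          refine Finset.sum_congr rfl fun j _ => ?_
          rw [hSfun (consDigit j z), mul_add, Finset.mul_sum]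
      _ = α * ((1 - α)⁻¹ * A)
          + ∑ m ∈ Finset.range n, (p:K)⁻¹ * ∑ j : Fin p,
              r j * ((r 0 ^ m * kappaN r (k % p ^ m) / (p : K) ^ m) *
                (if trunc (consDigit j z) (n - m) = k / p ^ m then (1:K) else 0)) := by
          rw [Finset.sum_add_distrib, mul_add, ← Finset.sum_mul, Finset.sum_comm,
            Finset.mul_sum]
          congr 1
          rw [hαdef]; ring
      _ = _ := by
          congr 1
          refine Finset.sum_congr rfl fun m hm => ?_
          exact per_m hp hpK r hr n k m (Finset.mem_range.mp hm) z
  rw [hSfun z, hsort]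
  have hstep : ((1 - α)⁻¹ * A + ∑ m ∈ Finset.range n, f m)
      - (α * ((1 - α)⁻¹ * A) + ∑ m ∈ Finset.range n, f (m+1))
      = (1 - α) * ((1 - α)⁻¹ * A)
        + ∑ m ∈ Finset.range n, (f m - f (m+1)) := by
    rw [Finset.sum_sub_distrib]; ring
  rw [hstep, Finset.sum_range_sub' f n, ← mul_assoc, mul_inv_cancel₀ hα, one_mul]
  have hf0 : f 0 = (if trunc z n = k then (1:K) else 0) := by
    simp [hf, Nat.mod_one, kappaN_zero]
  have hfn : f n = A := by
    rw [hf, hA]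
    simp [Nat.mod_eq_of_lt hk, Nat.div_eq_of_lt hk, trunc, Nat.sub_self]
  rw [hf0, hfn]
  ring

lemma sfun_congr (r : Fin p → K) (n k : ℕ) {z w : ℕ → Fin p}
    (h : ∀ i < n, z i = w i) : Sfun r n k z = Sfun r n k w := by
  unfold Sfun
  congr 1
  refine Finset.sum_congr rfl fun m hm => ?_
  have : trunc z (n - m) = trunc w (n - m) :=
    trunc_congr (fun i hi => h i (by omega))
  rw [this]

lemma sfun_isSB (r : Fin p → K) (n k : ℕ) : IsSB (Sfun r n k) :=
  ⟨n, fun z w h => sfun_congr r n k h⟩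

lemma sortOp_sub (r : Fin p → K) (φ ψ : (ℕ → Fin p) → K) (z : ℕ → Fin p) :
    sortOp r (fun w => φ w - ψ w) z = sortOp r φ z - sortOp r ψ z := by
  unfold sortOp
  rw [← mul_sub, ← Finset.sum_sub_distrib]
  congr 1
  exact Finset.sum_congr rfl fun j _ => by ring

lemma sortOp_sum {ι : Type*} (s : Finset ι) (r : Fin p → K)
    (a : ι → K) (F : ι → (ℕ → Fin p) → K) (z : ℕ → Fin p) :
    sortOp r (fun w => ∑ i ∈ s, a i * F i w) z
      = ∑ i ∈ s, a i * sortOp r (F i) z := by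
  unfold sortOp
  calc (p:K)⁻¹ * ∑ j : Fin p, r j * ∑ i ∈ s, a i * F i (consDigit j z)
      = (p:K)⁻¹ * ∑ j : Fin p, ∑ i ∈ s, r j * (a i * F i (consDigit j z)) := by
        congr 1; exact Finset.sum_congr rfl fun j _ => Finset.mul_sum _ _ _
    _ = ∑ i ∈ s, (p:K)⁻¹ * ∑ j : Fin p, r j * (a i * F i (consDigit j z)) := by
        rw [Finset.sum_comm, Finset.mul_sum]
    _ = _ := by
        refine Finset.sum_congr rfl fun i _ => ?_
        rw [show ∑ j : Fin p, r j * (a i * F i (consDigit j z))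
            = a i * ∑ j : Fin p, r j * F i (consDigit j z) from by
          rw [Finset.mul_sum]
          exact Finset.sum_congr rfl fun j _ => by ring]
        ring

lemma fixed_zero (r : Fin p → K) (hα : 1 - (p : K)⁻¹ * ∑ j : Fin p, r j ≠ 0) :
    ∀ (N : ℕ) (φ : (ℕ → Fin p) → K),
      (∀ z w : ℕ → Fin p, (∀ i < N, z i = w i) → φ z = φ w) →
      (∀ z, φ z - sortOp r φ z = 0) → ∀ z, φ z = 0 := by
  intro N
  induction N with
  | zero =>
    intro φ hconst heq z
    have hconst' : ∀ w, φ w = φ z := fun w =>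
      hconst w z (fun i hi => absurd hi (Nat.not_lt_zero i))
    have hsort : sortOp r φ z = ((p : K)⁻¹ * ∑ j : Fin p, r j) * φ z := by
      unfold sortOp
      rw [show ∑ j : Fin p, r j * φ (consDigit j z) = (∑ j : Fin p, r j) * φ z from by
        rw [Finset.sum_mul]
        exact Finset.sum_congr rfl fun j _ => by rw [hconst' (consDigit j z)]]
      ring
    have h0 := heq z
    rw [hsort] at h0
    have h1 : (1 - (p : K)⁻¹ * ∑ j : Fin p, r j) * φ z = 0 := by linear_combination h0
    exact (mul_eq_zero.mp h1).resolve_left hα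
  | succ N ih =>
    intro φ hmod heq z
    refine ih φ (fun z w h => ?_) heq z
    have h1 : φ z = sortOp r φ z := sub_eq_zero.mp (heq z)
    have h2 : φ w = sortOp r φ w := sub_eq_zero.mp (heq w)
    rw [h1, h2]
    unfold sortOp
    congr 1
    refine Finset.sum_congr rfl fun j _ => ?_
    congr 1
    apply hmod
    intro i hi
    match i with
    | 0 => rfl
    | Nat.succ i => exact h i (by omega)

end main

/-- If `1 − α(0)` is invertible (`α(0) = (1/p)∑_j r_j`), then `1 − L` is invertible on the
space of Schwartz–Bruhat functions, and the inverse sends the indicator of `{z ≡ k mod p^n}`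
to `S_{n,k}`; in particular `(1−L){S_{n,k}} = [z ≡ k mod p^n]` identically. -/
theorem stmt19 {p : ℕ} [NeZero p] (hp : 2 ≤ p) {K : Type*} [Field K]
    (hpK : (p : K) ≠ 0) (r : Fin p → K) (hr : ∀ j, r j ≠ 0)
    (hα : 1 - (p : K)⁻¹ * ∑ j : Fin p, r j ≠ 0) :
    (∀ ψ : (ℕ → Fin p) → K, IsSB ψ →
      ∃! φ : (ℕ → Fin p) → K, IsSB φ ∧ ∀ z, φ z - sortOp r φ z = ψ z) ∧
    (∀ n k : ℕ, k < p ^ n →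
      IsSB (Sfun r n k) ∧
      ∀ z, Sfun r n k z - sortOp r (Sfun r n k) z
        = (if trunc z n = k then (1 : K) else 0)) := by
  have hppos : 0 < p := by omega
  constructor
  · intro ψ hψ
    obtain ⟨N, hN⟩ := hψ
    set dig : ℕ → (ℕ → Fin p) := fun k i => ⟨k / p ^ i % p, Nat.mod_lt _ hppos⟩ with hdig
    set φ : (ℕ → Fin p) → K :=
      fun z => ∑ k ∈ Finset.range (p ^ N), ψ (dig k) * Sfun r N k z with hφ
    have hφSB : IsSB φ := by
      refine ⟨N, fun z w h => ?_⟩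
      simp only [hφ]
      exact Finset.sum_congr rfl fun k _ => by rw [sfun_congr r N k h]
    have hsolve : ∀ z, φ z - sortOp r φ z = ψ z := by
      intro z
      simp only [hφ]
      rw [sortOp_sum (Finset.range (p ^ N)) r (fun k => ψ (dig k))
        (fun k => Sfun r N k) z, ← Finset.sum_sub_distrib]
      have e1 : ∀ k ∈ Finset.range (p ^ N),
          ψ (dig k) * Sfun r N k z - ψ (dig k) * sortOp r (Sfun r N k) z
            = if k = trunc z N then ψ (dig k) else 0 := by
        intro k hk
        rw [← mul_sub, sfun_spec hp hpK r hr hα N k (Finset.mem_range.mp hk) z]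
        by_cases h : trunc z N = k
        · rw [if_pos h, if_pos h.symm, mul_one]
        · rw [if_neg h, if_neg (fun hh => h hh.symm), mul_zero]
      rw [Finset.sum_congr rfl e1,
        Finset.sum_ite_eq' (Finset.range (p ^ N)) (trunc z N) _,
        if_pos (Finset.mem_range.mpr (trunc_lt z N))]
      apply hN
      intro i hi
      exact Fin.ext (trunc_digit i N z hi)
    refine ⟨φ, ⟨hφSB, hsolve⟩, ?_⟩
    rintro φ' ⟨⟨N', hN'⟩, hsolve'⟩
    obtain ⟨Nφ, hNφ⟩ := hφSB
    funext z
    have key := fixed_zero r hα (max N' Nφ) (fun w => φ' w - φ w)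
      (fun z w h => by
        show φ' z - φ z = φ' w - φ w
        rw [hN' z w (fun i hi => h i (lt_of_lt_of_le hi (le_max_left _ _))),
          hNφ z w (fun i hi => h i (lt_of_lt_of_le hi (le_max_right _ _)))])
      (fun w => by
        show (φ' w - φ w) - sortOp r (fun w => φ' w - φ w) w = 0
        rw [sortOp_sub r φ' φ w]
        linear_combination hsolve' w - hsolve w)
      z
    exact sub_eq_zero.mp key
  · intro n k hk
    exact ⟨sfun_isSB r n k, fun z => sfun_spec hp hpK r hr hα n k hk z⟩
end
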